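/- arXiv:0912.2670 — 5 statements merged into one kernel-verified Lean document; each statement's English description precedes it below -/
import Mathlib

section
/- If b, c, d are odd integers with gcd(b,c) = 1 and (-d)^5 = b^2 - 2c^2, then there exist an integer j with -2 ≤ j ≤ 2 and coprime integers u, v such that b + c√2 = (1 + √2)^j (u + v√2)^5 in Z[√2]. -/
set_option synthInstance.maxHeartbeats 1000000
set_option maxHeartbeats 1000000

section Aux

lemma norm2_eq_zero_iff (z : Zsqrtd 2) : z.norm = 0 ↔ z = 0 := by
  refine Zsqrtd.norm_eq_zero (fun n h => ?_) z
  have h1 : n.natAbs * n.natAbs = 2 := by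
    have h2 := Int.natAbs_mul_self (a := n)
    have h3 : ((n.natAbs * n.natAbs : ℕ) : ℤ) = 2 := by rw [h2, ← h]
    exact_mod_cast h3
  rcases Nat.lt_or_ge n.natAbs 2 with h2 | h2
  · interval_cases h : n.natAbs <;> omega
  · nlinarith

/-- quotient for the Euclidean structure on `ℤ√2` -/
noncomputable def zq (a b : Zsqrtd 2) : Zsqrtd 2 :=
  ⟨round (((a * star b).re : ℚ) / (b.norm : ℚ)), round (((a * star b).im : ℚ) / (b.norm : ℚ))⟩

lemma zq_zero (a : Zsqrtd 2) : zq a 0 = 0 := by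
  simp [zq, Zsqrtd.norm_zero]
  rfl

lemma key_lt (a b : Zsqrtd 2) (hb : b ≠ 0) :
    ((a - zq a b * b).norm).natAbs < b.norm.natAbs := by
  set n : ℤ := b.norm with hn
  have hn0 : n ≠ 0 := fun h => hb ((norm2_eq_zero_iff b).mp (hn ▸ h))
  set p : Zsqrtd 2 := a * star b with hp
  set q : Zsqrtd 2 := zq a b with hq
  set r : Zsqrtd 2 := a - q * b with hr
  set e₁ : ℤ := p.re - q.re * n with he₁
  set e₂ : ℤ := p.im - q.im * n with he₂
  have step1 : r * star b = ⟨e₁, e₂⟩ := by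
    have hbn : (n : Zsqrtd 2) = b * star b := Zsqrtd.norm_eq_mul_conj b
    have : r * star b = p - q * (n : Zsqrtd 2) := by
      rw [hbn, hr, hp]; ring
    rw [this]
    ext <;> simp [Zsqrtd.re_mul, Zsqrtd.im_mul, he₁, he₂] <;> ring
  have step2 : r.norm * n = e₁ ^ 2 - 2 * e₂ ^ 2 := by
    have h1 : r.norm * n = (r * star b).norm := by
      rw [Zsqrtd.norm_mul, Zsqrtd.norm_conj, hn]
    rw [h1, step1, Zsqrtd.norm_def]; ring
  have hround : ∀ x : ℤ, |((x : ℚ) - round ((x:ℚ)/(n:ℚ)) * n)| ≤ |(n:ℚ)| / 2 := by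
    intro x
    have hN : (n : ℚ) ≠ 0 := Int.cast_ne_zero.mpr hn0
    have h1 : (x : ℚ) - round ((x:ℚ)/(n:ℚ)) * n = ((x:ℚ)/(n:ℚ) - round ((x:ℚ)/(n:ℚ))) * n := by
      field_simp
    rw [h1, abs_mul]
    have h2 := abs_sub_round ((x:ℚ)/(n:ℚ))
    have h3 : (0:ℚ) ≤ |(n:ℚ)| := abs_nonneg _
    nlinarith
  have hb1 : |(e₁ : ℚ)| ≤ |(n:ℚ)| / 2 := by
    have := hround p.re
    rw [he₁]; push_cast; convert this using 2 <;> push_cast [hq, zq] <;> ring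
  have hb2 : |(e₂ : ℚ)| ≤ |(n:ℚ)| / 2 := by
    have := hround p.im
    rw [he₂]; push_cast; convert this using 2 <;> push_cast [hq, zq] <;> ring
  have hsq : (r.norm : ℚ) ^ 2 < (n : ℚ) ^ 2 := by
    have hE1 : (e₁:ℚ)^2 ≤ (n:ℚ)^2/4 := by
      have := sq_abs (e₁:ℚ); have := sq_abs (n:ℚ)
      nlinarith [abs_nonneg (e₁:ℚ), abs_nonneg (n:ℚ)]
    have hE2 : (e₂:ℚ)^2 ≤ (n:ℚ)^2/4 := by
      have := sq_abs (e₂:ℚ); have := sq_abs (n:ℚ)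
      nlinarith [abs_nonneg (e₂:ℚ), abs_nonneg (n:ℚ)]
    have hRN : (r.norm : ℚ) * n = (e₁:ℚ)^2 - 2*(e₂:ℚ)^2 := by
      exact_mod_cast congrArg (Int.cast : ℤ → ℚ) step2
    have hN2 : (0:ℚ) < (n:ℚ)^2 := by positivity
    nlinarith [sq_nonneg ((r.norm:ℚ)*n), sq_nonneg (r.norm:ℚ)]
  have hZ : r.norm ^ 2 < n ^ 2 := by exact_mod_cast hsq
  have hNlt : (r.norm).natAbs ^ 2 < n.natAbs ^ 2 := by
    have : ((r.norm).natAbs:ℤ)^2 < (n.natAbs:ℤ)^2 := by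
      rw [Int.natAbs_sq, Int.natAbs_sq]; exact hZ
    exact_mod_cast this
  exact lt_of_pow_lt_pow_left₀ 2 (Nat.zero_le _) hNlt

noncomputable instance : EuclideanDomain (Zsqrtd 2) :=
  { (inferInstance : CommRing (Zsqrtd 2)), (inferInstance : Nontrivial (Zsqrtd 2)) with
    quotient := zq
    quotient_zero := zq_zero
    remainder := fun a b => a - zq a b * b
    quotient_mul_add_remainder_eq := fun a b => by ring
    r := fun x y => x.norm.natAbs < y.norm.natAbs
    r_wellFounded := (measure fun z : Zsqrtd 2 => z.norm.natAbs).wf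
    remainder_lt := fun a b hb => key_lt a b hb
    mul_left_not_lt := fun a b hb => by
      simp only [not_lt, Zsqrtd.norm_mul, Int.natAbs_mul]
      have h1 : 1 ≤ b.norm.natAbs := by
        rcases Nat.eq_zero_or_pos b.norm.natAbs with h | h
        · exact absurd ((norm2_eq_zero_iff b).mp (Int.natAbs_eq_zero.mp h)) hb
        · exact h
      exact Nat.le_mul_of_pos_right _ h1 }

lemma sqrt2_prime : Prime (⟨0, 1⟩ : Zsqrtd 2) := by
  rw [← irreducible_iff_prime]
  constructor
  · rw [← Zsqrtd.norm_eq_one_iff]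
    simp [Zsqrtd.norm_def]
  · intro s t hst
    have hnorm : ((⟨0,1⟩ : Zsqrtd 2)).norm = s.norm * t.norm := by rw [← Zsqrtd.norm_mul, ← hst]
    have h2 : s.norm.natAbs * t.norm.natAbs = 2 := by
      have : ((⟨0,1⟩ : Zsqrtd 2)).norm = -2 := by simp [Zsqrtd.norm_def]
      rw [← Int.natAbs_mul, ← hnorm, this]
      rfl
    rcases (Nat.prime_two).eq_one_or_self_of_dvd s.norm.natAbs ⟨t.norm.natAbs, h2.symm⟩ with h | h
    · exact Or.inl (Zsqrtd.norm_eq_one_iff.mp h)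
    · right
      rw [← Zsqrtd.norm_eq_one_iff]
      rw [h] at h2
      omega

end Aux

/-- The fundamental unit `1 + √2` of `ℤ[√2]`. -/
def sqrt2Unit : (Zsqrtd 2)ˣ :=
  ⟨⟨1, 1⟩, ⟨-1, 1⟩, by ext <;> simp [Zsqrtd.re_mul, Zsqrtd.im_mul],
    by ext <;> simp [Zsqrtd.re_mul, Zsqrtd.im_mul]⟩

section Units

lemma unit_nat : ∀ k : ℕ, ∀ a b : ℤ, b.natAbs = k → 0 < a → 0 ≤ b →
    (a * a - 2 * (b * b) = 1 ∨ a * a - 2 * (b * b) = -1) →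
    ∃ n : ℕ, (⟨a, b⟩ : Zsqrtd 2) = (↑sqrt2Unit : Zsqrtd 2) ^ n := by
  intro k
  induction k using Nat.strong_induction_on with
  | _ k ih =>
    intro a b hk ha hb hnorm
    rcases eq_or_lt_of_le hb with hb0 | hbpos
    · have ha1 : a = 1 := by
        rcases hnorm with h | h <;> nlinarith
      refine ⟨0, ?_⟩
      rw [pow_zero, ha1, ← hb0]
      rfl
    · have h1 : b ≤ a := by rcases hnorm with h | h <;> nlinarith
      have h2 : a < 2 * b := by rcases hnorm with h | h <;> nlinarith
      obtain ⟨n, hn⟩ := ih (a - b).natAbs (by omega) (2 * b - a) (a - b) rfl (by omega) (by omega)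
        (by rcases hnorm with h | h
            · right; linear_combination -h
            · left; linear_combination -h)
      refine ⟨n + 1, ?_⟩
      rw [pow_succ, ← hn]
      show (⟨a, b⟩ : Zsqrtd 2) = (⟨2*b-a, a-b⟩ : Zsqrtd 2) * ⟨1, 1⟩
      ext <;> simp [Zsqrtd.re_mul, Zsqrtd.im_mul] <;> ring

lemma elem_unit_classify (x : Zsqrtd 2) (h : x.norm = 1 ∨ x.norm = -1) :
    ∃ n : ℤ, x = ↑(sqrt2Unit ^ n) ∨ x = -↑(sqrt2Unit ^ n) := by
  have main2 : ∀ y : Zsqrtd 2, 0 < y.re → (y.norm = 1 ∨ y.norm = -1) →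
      ∃ n : ℤ, y = ↑(sqrt2Unit ^ n) ∨ y = -↑(sqrt2Unit ^ n) := by
    intro y hre hy
    rw [Zsqrtd.norm_def] at hy
    rcases le_or_gt 0 y.im with him | him
    · obtain ⟨n, hn⟩ := unit_nat y.im.natAbs y.re y.im rfl hre him
        (by rcases hy with h | h
            · left; linear_combination h
            · right; linear_combination h)
      refine ⟨(n : ℤ), Or.inl ?_⟩
      rw [zpow_natCast, Units.val_pow_eq_pow_val]
      exact hn
    · obtain ⟨n, hn⟩ := unit_nat (-y.im).natAbs y.re (-y.im) rfl hre (by omega)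
        (by rcases hy with h | h
            · left; linear_combination h
            · right; linear_combination h)
      have hstar : star y = (↑(sqrt2Unit ^ (n:ℤ)) : Zsqrtd 2) := by
        rw [zpow_natCast, Units.val_pow_eq_pow_val]
        exact hn
      have hmul : y * ↑(sqrt2Unit ^ (n:ℤ)) = ((y.norm : ℤ) : Zsqrtd 2) := by
        rw [← hstar, ← Zsqrtd.norm_eq_mul_conj]
      have hinv : (↑(sqrt2Unit ^ (n:ℤ)) : Zsqrtd 2) * ↑(sqrt2Unit ^ (-(n:ℤ))) = 1 := by
        rw [← Units.val_mul, ← zpow_add, add_neg_cancel, zpow_zero, Units.val_one]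
      have hy2 : y = ((y.norm : ℤ) : Zsqrtd 2) * ↑(sqrt2Unit ^ (-(n:ℤ))) := by
        calc y = y * (↑(sqrt2Unit ^ (n:ℤ)) * ↑(sqrt2Unit ^ (-(n:ℤ)))) := by rw [hinv, mul_one]
        _ = (y * ↑(sqrt2Unit ^ (n:ℤ))) * ↑(sqrt2Unit ^ (-(n:ℤ))) := by ring
        _ = ((y.norm : ℤ) : Zsqrtd 2) * ↑(sqrt2Unit ^ (-(n:ℤ))) := by rw [hmul]
      have hnormval : y.norm = 1 ∨ y.norm = -1 := by
        rw [Zsqrtd.norm_def]; exact hy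
      refine ⟨-(n:ℤ), ?_⟩
      rcases hnormval with h | h
      · left; rw [hy2, h]; simp
      · right; rw [hy2, h]; simp
  have hre : x.re ≠ 0 := by
    intro h0
    rw [Zsqrtd.norm_def, h0] at h
    have h' : (2:ℤ) * (x.im * x.im) = -1 ∨ (2:ℤ) * (x.im * x.im) = 1 := by
      rcases h with h | h
      · left; linear_combination -h
      · right; linear_combination -h
    generalize x.im * x.im = m at h'
    omega
  rcases lt_or_gt_of_ne hre with hneg | hpos
  · obtain ⟨n, hn⟩ := main2 (-x) (by simpa using hneg)
      (by rwa [Zsqrtd.norm_neg])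
    refine ⟨n, ?_⟩
    rcases hn with h1 | h1
    · right; rw [← h1]; ring
    · left
      have h2 := congrArg Neg.neg h1
      simpa using h2
  · exact main2 x hpos h

end Units

/-- If `b, c, d` are odd integers with `gcd(b,c) = 1` and `(-d)⁵ = b² - 2c²`,
then `b + c√2 = (1+√2)^j (u+v√2)⁵` for some `-2 ≤ j ≤ 2` and coprime `u, v`. -/
theorem exists_fifth_power_decomposition (b c d : ℤ)
    (hb : Odd b) (hc : Odd c) (hd : Odd d) (hcop : Int.gcd b c = 1)
    (h : (-d) ^ 5 = b ^ 2 - 2 * c ^ 2) :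
    ∃ j : ℤ, -2 ≤ j ∧ j ≤ 2 ∧ ∃ u v : ℤ, Int.gcd u v = 1 ∧
      (⟨b, c⟩ : Zsqrtd 2) = (↑(sqrt2Unit ^ j) : Zsqrtd 2) * (⟨u, v⟩ : Zsqrtd 2) ^ 5 := by
  set x : Zsqrtd 2 := ⟨b, c⟩ with hx
  set y : Zsqrtd 2 := ⟨b, -c⟩ with hy
  have hb0 : b ≠ 0 := by
    rintro rfl; exact (Int.not_odd_iff_even.mpr Even.zero) hb
  -- the product identity
  have hxy : x * y = (((-d : ℤ) : Zsqrtd 2)) ^ 5 := by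
    have h1 : x * y = ((b^2 - 2*c^2 : ℤ) : Zsqrtd 2) := by
      have h2 : x * y = ⟨b^2 - 2*c^2, 0⟩ := by
        ext <;> simp [Zsqrtd.re_mul, Zsqrtd.im_mul] <;> ring
      rw [h2]
      ext <;> simp only [Zsqrtd.re_intCast, Zsqrtd.im_intCast]
    rw [h1, ← h]
    push_cast
    ring
  -- coprimality of x and y in ℤ√2
  have hcoprime : IsCoprime x y := by
    apply isCoprime_of_irreducible_dvd
    · rintro ⟨h1, -⟩
      exact hb0 (congrArg Zsqrtd.re h1)
    · intro z hz hzx hzy'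
      have h2b : z ∣ ((2*b : ℤ) : Zsqrtd 2) := by
        have : x + y = ((2*b : ℤ) : Zsqrtd 2) := by
          ext <;> simp [hx, hy] <;> ring
        rw [← this]; exact dvd_add hzx hzy'
      have h4c : z ∣ ((4*c : ℤ) : Zsqrtd 2) := by
        have hsub : x - y = ((2*c : ℤ) : Zsqrtd 2) * ⟨0, 1⟩ := by
          ext <;> simp [hx, hy, Zsqrtd.re_mul, Zsqrtd.im_mul] <;> ring
        have h1 : z ∣ (x - y) * ⟨0, 1⟩ := Dvd.dvd.mul_right (dvd_sub hzx hzy') _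
        have h2 : (x - y) * (⟨0, 1⟩ : Zsqrtd 2) = ((4*c : ℤ) : Zsqrtd 2) := by
          rw [hsub]
          ext <;> simp [Zsqrtd.re_mul, Zsqrtd.im_mul] <;> ring
        rwa [h2] at h1
      have h4b : z ∣ ((4*b : ℤ) : Zsqrtd 2) := by
        have : ((4*b : ℤ) : Zsqrtd 2) = 2 * ((2*b : ℤ) : Zsqrtd 2) := by push_cast; ring
        rw [this]; exact Dvd.dvd.mul_left h2b 2
      have h4 : z ∣ (4 : Zsqrtd 2) := by
        obtain ⟨s, t, hst⟩ := Int.isCoprime_iff_gcd_eq_one.mpr hcop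
        have : (4 : Zsqrtd 2) = ((s:ℤ) : Zsqrtd 2) * ((4*b : ℤ) : Zsqrtd 2)
            + ((t:ℤ) : Zsqrtd 2) * ((4*c : ℤ) : Zsqrtd 2) := by
          push_cast
          have : ((4:ℤ) : Zsqrtd 2) = ((4 * (s*b + t*c) : ℤ) : Zsqrtd 2) := by rw [hst]; norm_num
          push_cast at this
          linear_combination this
        rw [this]
        exact dvd_add (Dvd.dvd.mul_left h4b _) (Dvd.dvd.mul_left h4c _)
      have hpow4 : (4 : Zsqrtd 2) = (⟨0, 1⟩ : Zsqrtd 2) ^ 4 := by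
        ext <;> simp [pow_succ, Zsqrtd.re_mul, Zsqrtd.im_mul]
      rw [hpow4] at h4
      obtain ⟨i, hi4, hassoc⟩ := (dvd_prime_pow sqrt2_prime 4).mp h4
      rcases Nat.eq_zero_or_pos i with hi0 | hipos
      · rw [hi0, pow_zero] at hassoc
        exact hz.not_isUnit (associated_one_iff_isUnit.mp hassoc)
      · have hdvd : (⟨0,1⟩ : Zsqrtd 2) ∣ z :=
          dvd_trans (dvd_pow_self _ (Nat.pos_iff_ne_zero.mp hipos)) hassoc.symm.dvd
        obtain ⟨t, ht⟩ := dvd_trans hdvd hzx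
        have hbre : b = 2 * t.im := by
          have := congrArg Zsqrtd.re ht
          simpa [hx, Zsqrtd.re_mul] using this
        exact (Int.not_odd_iff_even.mpr ⟨t.im, by omega⟩) hb
  -- fifth power up to a unit
  obtain ⟨w, hw⟩ := exists_associated_pow_of_mul_eq_pow' hcoprime hxy
  obtain ⟨ε, hε⟩ := hw
  -- classify the unit
  have hεnorm : ((ε : Zsqrtd 2)).norm = 1 ∨ ((ε : Zsqrtd 2)).norm = -1 := by
    have := Zsqrtd.norm_eq_one_iff.mpr ε.isUnit
    rcases Int.natAbs_eq (Zsqrtd.norm (ε : Zsqrtd 2)) with h' | h' <;> omega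
  obtain ⟨m, hm⟩ := elem_unit_classify (ε : Zsqrtd 2) hεnorm
  -- split the exponent
  set j : ℤ := if m % 5 ≤ 2 then m % 5 else m % 5 - 5 with hj
  set q : ℤ := if m % 5 ≤ 2 then m / 5 else m / 5 + 1 with hq
  have hjq : j + q * 5 = m := by
    rw [hj, hq]; split_ifs <;> omega
  have hj1 : -2 ≤ j := by rw [hj]; split_ifs <;> omega
  have hj2 : j ≤ 2 := by rw [hj]; split_ifs <;> omega
  have hpowsplit : (↑(sqrt2Unit ^ m) : Zsqrtd 2)
      = (↑(sqrt2Unit ^ j) : Zsqrtd 2) * ((↑(sqrt2Unit ^ q) : Zsqrtd 2)) ^ 5 := by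
    have h5 : ((sqrt2Unit ^ q) ^ (5:ℕ)) = sqrt2Unit ^ (q * 5) := by
      rw [← zpow_natCast (sqrt2Unit ^ q) 5, ← zpow_mul]
      norm_num
    calc (↑(sqrt2Unit ^ m) : Zsqrtd 2) = ↑(sqrt2Unit ^ (j + q * 5)) := by rw [hjq]
      _ = ↑(sqrt2Unit ^ j * sqrt2Unit ^ (q * 5)) := by rw [zpow_add]
      _ = ↑(sqrt2Unit ^ j * (sqrt2Unit ^ q) ^ (5:ℕ)) := by rw [h5]
      _ = (↑(sqrt2Unit ^ j) : Zsqrtd 2) * ((↑(sqrt2Unit ^ q) : Zsqrtd 2)) ^ 5 := by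
          rw [Units.val_mul, Units.val_pow_eq_pow_val]
  -- define W according to the sign
  have key : ∃ W : Zsqrtd 2, x = (↑(sqrt2Unit ^ j) : Zsqrtd 2) * W ^ 5 := by
    rcases hm with hm | hm
    · refine ⟨(↑(sqrt2Unit ^ q) : Zsqrtd 2) * w, ?_⟩
      rw [mul_pow, ← hε, hm, hpowsplit]
      ring
    · refine ⟨-((↑(sqrt2Unit ^ q) : Zsqrtd 2)) * w, ?_⟩
      have hodd : Odd 5 := ⟨2, by norm_num⟩
      rw [mul_pow, hodd.neg_pow, ← hε, hm, hpowsplit]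
      ring
  obtain ⟨W, hW⟩ := key
  refine ⟨j, hj1, hj2, W.re, W.im, ?_, ?_⟩
  · -- coprimality of W.re, W.im
    set g : ℕ := Int.gcd W.re W.im with hg
    have hgW : ((g : ℤ) : Zsqrtd 2) ∣ W :=
      (Zsqrtd.intCast_dvd _ _).mpr ⟨Int.gcd_dvd_left W.re W.im, Int.gcd_dvd_right W.re W.im⟩
    have hgx : ((g : ℤ) : Zsqrtd 2) ∣ x :=
      hW ▸ Dvd.dvd.mul_left (dvd_pow hgW (by norm_num)) _
    obtain ⟨hgb, hgc⟩ := (Zsqrtd.intCast_dvd _ _).mp hgx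
    have : (g : ℤ) ∣ ((Int.gcd b c : ℕ) : ℤ) := Int.dvd_coe_gcd hgb hgc
    rw [hcop] at this
    have : g ∣ 1 := by exact_mod_cast this
    exact Nat.dvd_one.mp this
  · have : (⟨W.re, W.im⟩ : Zsqrtd 2) = W := rfl
    rw [this]
    exact hW
end

section
/- There is no pair of rational numbers (x, y) with y^2 = 2x^{10} + 55x^8 + 680x^6 + 1160x^4 + 640x^2 - 16. -/
/-- If every prime factor of `n` is `±1 mod 8`, then `n ≡ ±1 mod 8` (or `n = 0`). -/
private lemma mod8_of_prime_factors (n : ℕ)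
    (h : ∀ p : ℕ, p.Prime → p ∣ n → p % 8 = 1 ∨ p % 8 = 7) :
    n % 8 = 1 ∨ n % 8 = 7 ∨ n = 0 := by
  induction n using Nat.strong_induction_on with
  | _ n ih =>
    rcases Nat.lt_or_ge n 2 with h2 | h2
    · interval_cases n
      · right; right; rfl
      · left; rfl
    · have h1 : n ≠ 1 := by omega
      have hp := Nat.minFac_prime h1
      obtain ⟨m, hm⟩ := Nat.minFac_dvd n
      have hm0 : m ≠ 0 := by rintro rfl; omega
      have hmlt : m < n := by
        have h2le : 2 * m ≤ n.minFac * m := Nat.mul_le_mul_right m hp.two_le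
        omega
      have hm8 := ih m hmlt (fun p pp pd => h p pp (hm ▸ pd.mul_left _))
      have hp8 := h _ hp (Nat.minFac_dvd n)
      rw [hm, Nat.mul_mod]
      rcases hm8 with h2' | h2' | h2'
      · rcases hp8 with h1' | h1' <;> rw [h1', h2'] <;> norm_num
      · rcases hp8 with h1' | h1' <;> rw [h1', h2'] <;> norm_num
      · exact absurd h2' hm0

private lemma zmod4_case : ∀ s t c : ZMod 4,
    c ^ 2 ≠ 2 * ((2*s+1) * ((2*s+1) ^ 4 + 20 * (2*s+1) ^ 2 * (2*t) ^ 2 + 20 * (2*t) ^ 4)) ^ 2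
      - ((2*t) * (5 * (2*s+1) ^ 4 + 20 * (2*s+1) ^ 2 * (2*t) ^ 2 + 4 * (2*t) ^ 4)) ^ 2 := by
  decide

private lemma zmod8_case : ∀ k t c : ZMod 8,
    c ^ 2 ≠ 8 * k ^ 2 * (4 * k ^ 4 + 20 * k ^ 2 * (2*t+1) ^ 2 + 5 * (2*t+1) ^ 4) ^ 2
      - (2*t+1) ^ 2 * (20 * k ^ 4 + 20 * k ^ 2 * (2*t+1) ^ 2 + (2*t+1) ^ 4) ^ 2 := by
  decide

/-- The hyperelliptic curve `C₀ : y² = 2x¹⁰ + 55x⁸ + 680x⁶ + 1160x⁴ + 640x² - 16`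
has no affine rational points. -/
theorem no_rational_points_C0 :
    ¬ ∃ x y : ℚ, y ^ 2 =
        2 * x ^ 10 + 55 * x ^ 8 + 680 * x ^ 6 + 1160 * x ^ 4 + 640 * x ^ 2 - 16 := by
  rintro ⟨x, y, h⟩
  -- Clear denominators: write x = a/b in lowest terms.
  set a : ℤ := x.num with ha
  set b : ℤ := (x.den : ℤ) with hbdef
  have hbq : (b : ℚ) ≠ 0 := by
    have h0 : ((x.den : ℚ)) ≠ 0 := Nat.cast_ne_zero.mpr x.den_nz
    rw [hbdef]; push_cast; exact h0
  have hx : (x : ℚ) = (a : ℚ) / (b : ℚ) := by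
    rw [ha, hbdef]; exact_mod_cast (Rat.num_div_den x).symm
  have hcop : IsCoprime a b := by
    rw [Int.isCoprime_iff_gcd_eq_one]
    simpa [Int.gcd, ha, hbdef] using x.reduced
  -- The key algebraic identity: f(x)·b¹⁰ = 2A² - B²  with A, B as below.
  have key : (y * (b : ℚ) ^ 5) ^ 2 =
      ((2 * (a * (a ^ 4 + 20 * a ^ 2 * b ^ 2 + 20 * b ^ 4)) ^ 2
        - (b * (5 * a ^ 4 + 20 * a ^ 2 * b ^ 2 + 4 * b ^ 4)) ^ 2 : ℤ) : ℚ) := by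
    have hab : (a : ℚ) = x * (b : ℚ) := by
      rw [hx]; field_simp
    push_cast
    rw [hab]
    linear_combination ((b : ℚ) ^ 10) * h
  -- y·b⁵ is an integer c.
  obtain ⟨c, hc⟩ : ∃ c : ℤ, (c : ℚ) = y * (b : ℚ) ^ 5 := by
    have h1 : ((y * (b : ℚ) ^ 5) * (y * (b : ℚ) ^ 5)).den = 1 := by
      rw [← sq, key]; exact Rat.den_intCast _
    rw [Rat.mul_self_den] at h1
    have hd1 : (y * (b : ℚ) ^ 5).den = 1 := by
      exact Nat.eq_one_of_mul_eq_one_right h1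
    exact ⟨(y * (b : ℚ) ^ 5).num, (Rat.den_eq_one_iff _).mp hd1⟩
  have hceq : c ^ 2 = 2 * (a * (a ^ 4 + 20 * a ^ 2 * b ^ 2 + 20 * b ^ 4)) ^ 2
      - (b * (5 * a ^ 4 + 20 * a ^ 2 * b ^ 2 + 4 * b ^ 4)) ^ 2 := by
    have h2 : ((c : ℚ)) ^ 2 = ((2 * (a * (a ^ 4 + 20 * a ^ 2 * b ^ 2 + 20 * b ^ 4)) ^ 2
        - (b * (5 * a ^ 4 + 20 * a ^ 2 * b ^ 2 + 4 * b ^ 4)) ^ 2 : ℤ) : ℚ) := by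
      rw [hc]; exact key
    exact_mod_cast h2
  clear key hc h hx hbq
  -- Case analysis on parities of a and b.
  rcases Int.even_or_odd a with hae | hao
  · -- a even, so b odd (coprimality)
    have hbo : Odd b := by
      rcases Int.even_or_odd b with hbe | hbo
      · exfalso
        obtain ⟨u, hu⟩ := hae
        obtain ⟨v, hv⟩ := hbe
        have hunit := hcop.isUnit_of_dvd' (show (2:ℤ) ∣ a from ⟨u, by omega⟩)
          (show (2:ℤ) ∣ b from ⟨v, by omega⟩)
        rw [Int.isUnit_iff] at hunit
        omega
      · exact hbo
    obtain ⟨k, hk⟩ := hae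
    -- c² = 16·(8k²X² - b²Y²), so 4 ∣ c, and then c₀² ≡ -1 (mod 8), impossible.
    have h16 : (4 : ℤ) ^ 2 ∣ c ^ 2 := by
      refine ⟨8 * k ^ 2 * (4 * k ^ 4 + 20 * k ^ 2 * b ^ 2 + 5 * b ^ 4) ^ 2
        - b ^ 2 * (20 * k ^ 4 + 20 * k ^ 2 * b ^ 2 + b ^ 4) ^ 2, ?_⟩
      rw [hceq, hk]; ring
    have h4c : (4 : ℤ) ∣ c := (Int.pow_dvd_pow_iff two_ne_zero).mp h16
    obtain ⟨c0, hc0⟩ := h4c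
    have hmain : c0 ^ 2 = 8 * k ^ 2 * (4 * k ^ 4 + 20 * k ^ 2 * b ^ 2 + 5 * b ^ 4) ^ 2
        - b ^ 2 * (20 * k ^ 4 + 20 * k ^ 2 * b ^ 2 + b ^ 4) ^ 2 := by
      have h16' : 16 * c0 ^ 2 =
          16 * (8 * k ^ 2 * (4 * k ^ 4 + 20 * k ^ 2 * b ^ 2 + 5 * b ^ 4) ^ 2
          - b ^ 2 * (20 * k ^ 4 + 20 * k ^ 2 * b ^ 2 + b ^ 4) ^ 2) := by
        rw [show (16 : ℤ) * c0 ^ 2 = (4 * c0) ^ 2 by ring, ← hc0, hceq, hk]; ring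
      linarith
    obtain ⟨t, ht⟩ := hbo
    refine zmod8_case (k : ZMod 8) (t : ZMod 8) (c0 : ZMod 8) ?_
    rw [ht] at hmain
    have hq := congrArg (Int.cast : ℤ → ZMod 8) hmain
    push_cast at hq
    linear_combination hq
  · rcases Int.even_or_odd b with hbe | hbo
    · -- b even, a odd: contradiction mod 4.
      obtain ⟨s, hs⟩ := hao
      obtain ⟨t, ht⟩ := hbe
      refine zmod4_case (s : ZMod 4) (t : ZMod 4) (c : ZMod 4) ?_
      rw [hs, show b = 2*t from by omega] at hceq
      have hq := congrArg (Int.cast : ℤ → ZMod 4) hceq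
      push_cast at hq
      linear_combination hq
    · -- Main case: a, b both odd.
      obtain ⟨s, hs⟩ := hao
      obtain ⟨t, ht⟩ := hbo
      -- Q ≡ 5 (mod 8)
      have hQ5 : (5 * a ^ 4 + 20 * a ^ 2 * b ^ 2 + 4 * b ^ 4) % 8 = 5 := by
        have hW : 5 * a ^ 4 + 20 * a ^ 2 * b ^ 2 + 4 * b ^ 4 =
            8 * (3 + 14 * t + 22 * t ^ 2 + 16 * t ^ 3 + 8 * t ^ 4 + 15 * s + 40 * s * t
              + 40 * s * t ^ 2 + 25 * s ^ 2 + 40 * s ^ 2 * t + 40 * s ^ 2 * t ^ 2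
              + 20 * s ^ 3 + 10 * s ^ 4) + 5 := by
          rw [hs, ht]; ring
        omega
      have hb0 : b ≠ 0 := by intro h0; rw [h0] at ht; omega
      have hQpos : 0 < 5 * a ^ 4 + 20 * a ^ 2 * b ^ 2 + 4 * b ^ 4 := by
        have h1 : 0 < b ^ 4 := by positivity
        nlinarith [sq_nonneg (a ^ 2), sq_nonneg (a * b)]
      set Q : ℤ := 5 * a ^ 4 + 20 * a ^ 2 * b ^ 2 + 4 * b ^ 4 with hQdef
      set n : ℕ := Q.toNat with hndef
      have hn : (n : ℤ) = Q := Int.toNat_of_nonneg hQpos.le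
      have hkey : ∀ p : ℕ, p.Prime → p ∣ n → p % 8 = 1 ∨ p % 8 = 7 := by
        intro p pp hpn
        have hpQ : (p : ℤ) ∣ Q := by
          rw [← hn]; exact_mod_cast hpn
        have hp2 : p ≠ 2 := by
          rintro rfl
          obtain ⟨m, hm⟩ := hpQ
          omega
        have hpI : Prime (p : ℤ) := Nat.prime_iff_prime_int.mp pp
        have hpodd : ¬ ((p : ℤ) ∣ 2) := by
          intro hd
          have hd' : p ∣ 2 := by exact_mod_cast hd
          have := Nat.le_of_dvd (by norm_num) hd'
          have := pp.two_le
          omega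
        -- p ∤ a
        have hpa : ¬ ((p : ℤ) ∣ a) := by
          intro hpa
          have h4b : (p : ℤ) ∣ 4 * b ^ 4 := by
            have hid : (4 : ℤ) * b ^ 4 = Q - a * (a * (5 * a ^ 2 + 20 * b ^ 2)) := by
              rw [hQdef]; ring
            rw [hid]
            exact dvd_sub hpQ (hpa.mul_right _)
          rcases hpI.dvd_mul.mp h4b with hd | hd
          · exact hpodd (hpI.dvd_of_dvd_pow (show (p : ℤ) ∣ 2 ^ 2 by norm_num; exact hd))
          · exact hpI.not_unit (hcop.isUnit_of_dvd' hpa (hpI.dvd_of_dvd_pow hd))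
        -- p ∤ P where P = a⁴+20a²b²+20b⁴
        have hpP : ¬ ((p : ℤ) ∣ (a ^ 4 + 20 * a ^ 2 * b ^ 2 + 20 * b ^ 4)) := by
          intro hpP
          have hpb : ¬ ((p : ℤ) ∣ b) := by
            intro hpb
            have ha4 : (p : ℤ) ∣ a ^ 4 := by
              have hid : (a : ℤ) ^ 4 = (a ^ 4 + 20 * a ^ 2 * b ^ 2 + 20 * b ^ 4)
                  - b * (20 * a ^ 2 * b + 20 * b ^ 3) := by ring
              rw [hid]
              exact dvd_sub hpP (hpb.mul_right _)
            exact hpa (hpI.dvd_of_dvd_pow ha4)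
          have h56 : (p : ℤ) ∣ 5 * a ^ 2 + 6 * b ^ 2 := by
            have h16 : (p : ℤ) ∣ 16 * (b ^ 2 * (5 * a ^ 2 + 6 * b ^ 2)) := by
              have hid : (16 : ℤ) * (b ^ 2 * (5 * a ^ 2 + 6 * b ^ 2)) =
                  5 * (a ^ 4 + 20 * a ^ 2 * b ^ 2 + 20 * b ^ 4) - Q := by
                rw [hQdef]; ring
              rw [hid]
              exact dvd_sub (hpP.mul_left 5) hpQ
            rcases hpI.dvd_mul.mp h16 with hd | hd
            · exact absurd (hpI.dvd_of_dvd_pow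
                (show (p : ℤ) ∣ 2 ^ 4 by norm_num; exact hd)) hpodd
            · rcases hpI.dvd_mul.mp hd with hd' | hd'
              · exact absurd (hpI.dvd_of_dvd_pow hd') hpb
              · exact hd'
          have h64 : (p : ℤ) ∣ 64 * b ^ 4 := by
            have hid : (64 : ℤ) * b ^ 4 = (5 * a ^ 2 + 6 * b ^ 2) * (5 * a ^ 2 + 94 * b ^ 2)
                - 25 * (a ^ 4 + 20 * a ^ 2 * b ^ 2 + 20 * b ^ 4) := by ring
            rw [hid]
            exact dvd_sub (h56.mul_right _) (hpP.mul_left 25)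
          rcases hpI.dvd_mul.mp h64 with hd | hd
          · exact hpodd (hpI.dvd_of_dvd_pow (show (p : ℤ) ∣ 2 ^ 6 by norm_num; exact hd))
          · exact hpb (hpI.dvd_of_dvd_pow hd)
        have hpA : ¬ ((p : ℤ) ∣ a * (a ^ 4 + 20 * a ^ 2 * b ^ 2 + 20 * b ^ 4)) :=
          fun hd => (hpI.dvd_mul.mp hd).elim hpa hpP
        haveI : Fact p.Prime := ⟨pp⟩
        -- In ZMod p : c² = 2·A², with A invertible, so 2 is a square mod p.
        have hAz : ((a : ZMod p) * ((a : ZMod p) ^ 4 + 20 * (a : ZMod p) ^ 2 * (b : ZMod p) ^ 2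
            + 20 * (b : ZMod p) ^ 4)) ≠ 0 := by
          intro h0
          apply hpA
          rw [← ZMod.intCast_zmod_eq_zero_iff_dvd]
          push_cast
          exact h0
        have hQz : (5 * (a : ZMod p) ^ 4 + 20 * (a : ZMod p) ^ 2 * (b : ZMod p) ^ 2
            + 4 * (b : ZMod p) ^ 4) = 0 := by
          have h0 := (ZMod.intCast_zmod_eq_zero_iff_dvd Q p).mpr hpQ
          rw [hQdef] at h0
          push_cast at h0
          linear_combination h0
        have hsq : ((c : ZMod p)) ^ 2 = 2 * ((a : ZMod p) * ((a : ZMod p) ^ 4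
            + 20 * (a : ZMod p) ^ 2 * (b : ZMod p) ^ 2 + 20 * (b : ZMod p) ^ 4)) ^ 2 := by
          have hq := congrArg (Int.cast : ℤ → ZMod p) hceq
          rw [hQdef] at hq
          push_cast at hq
          linear_combination hq - (b : ZMod p) ^ 2 * (5 * (a : ZMod p) ^ 4
            + 20 * (a : ZMod p) ^ 2 * (b : ZMod p) ^ 2 + 4 * (b : ZMod p) ^ 4) * hQz
        have h2sq : IsSquare (2 : ZMod p) := by
          refine ⟨(c : ZMod p) * ((a : ZMod p) * ((a : ZMod p) ^ 4
            + 20 * (a : ZMod p) ^ 2 * (b : ZMod p) ^ 2 + 20 * (b : ZMod p) ^ 4))⁻¹, ?_⟩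
          rw [show ∀ u v : ZMod p, u * v⁻¹ * (u * v⁻¹) = u ^ 2 * (v ^ 2)⁻¹ from fun u v => by ring,
            hsq, mul_inv_cancel_right₀ (pow_ne_zero 2 hAz)]
        rwa [ZMod.exists_sq_eq_two_iff hp2] at h2sq
      have hfinal := mod8_of_prime_factors n hkey
      omega
end

section
/- The polynomial x^{10} + 30x^9 + 215x^8 + 720x^7 + 1840x^6 + 3024x^5 + 3880x^4 + 2880x^3 + 1520x^2 + 480x + 112 is irreducible over Q. -/
open Polynomial

namespace F1IrredAux

abbrev F := ZMod 11

instance : Fact (Nat.Prime 11) := ⟨by norm_num⟩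

noncomputable def fF : F[X] := X ^ 10 + 30 * X ^ 9 + 215 * X ^ 8 + 720 * X ^ 7 + 1840 * X ^ 6 +
      3024 * X ^ 5 + 3880 * X ^ 4 + 2880 * X ^ 3 + 1520 * X ^ 2 + 480 * X + 112

lemma fF_monic : fF.Monic := by unfold fF; monicity!

lemma fF_deg : fF.natDegree = 10 := by unfold fF; compute_degree!

lemma Ffix : ∀ (n : ℕ) (a : F), a ^ 11 ^ n = a := by
  intro n
  induction n with
  | zero => intro a; rw [pow_zero, pow_one]
  | succ n ih =>
      intro a
      rw [pow_succ, pow_mul, ih]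
      exact ZMod.pow_card a

lemma rabin (f : F[X]) (hm : f.Monic) (hdeg : f.natDegree = 10)
    (h10 : (AdjoinRoot.root f) ^ 11 ^ 10 = AdjoinRoot.root f)
    (h5 : IsUnit ((AdjoinRoot.root f) ^ 11 ^ 5 - AdjoinRoot.root f))
    (h2 : IsUnit ((AdjoinRoot.root f) ^ 11 ^ 2 - AdjoinRoot.root f)) :
    Irreducible f := by
  have hf0 : f ≠ 0 := hm.ne_zero
  have hfu : ¬ IsUnit f := by
    intro h
    have := natDegree_eq_zero_of_isUnit h
    omega
  obtain ⟨g, hgirr, hgdvd⟩ := WfDvdMonoid.exists_irreducible_factor hfu hf0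
  haveI : Fact (Irreducible g) := ⟨hgirr⟩
  obtain ⟨c, hc⟩ := hgdvd
  set K := AdjoinRoot g
  set β := AdjoinRoot.root g with hβ
  -- ring hom from AdjoinRoot f to K
  have hev : f.eval₂ (AdjoinRoot.of g) β = 0 := by
    rw [hc, eval₂_mul, AdjoinRoot.eval₂_root, zero_mul]
  set χ : AdjoinRoot f →+* K := AdjoinRoot.lift (AdjoinRoot.of g) β hev with hχ
  have hχroot : χ (AdjoinRoot.root f) = β := AdjoinRoot.lift_root hev
  -- K is a finite field of cardinality 11 ^ d
  have hg0 : g ≠ 0 := hgirr.ne_zero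
  set pb := AdjoinRoot.powerBasis hg0 with hpb
  haveI : FiniteDimensional F K := pb.finite
  haveI : Finite K := Module.finite_of_finite F
  haveI : Fintype K := Fintype.ofFinite K
  haveI : CharP K 11 := charP_of_injective_algebraMap (algebraMap F K).injective 11
  set d := g.natDegree with hd
  have hcard : Fintype.card K = 11 ^ d := by
    have h1 := Module.card_eq_pow_finrank (K := F) (V := K)
    rw [ZMod.card] at h1
    rw [h1, pb.finrank, AdjoinRoot.powerBasis_dim]
  have hd1 : 1 ≤ d := hgirr.natDegree_pos
  have hd10 : d ≤ 10 := by
    have := natDegree_le_of_dvd ⟨c, hc⟩ hf0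
    omega
  -- β is fixed by x ↦ x ^ 11 ^ 10, hence all of K is
  have hβ10 : β ^ 11 ^ 10 = β := by
    rw [← hχroot, ← map_pow, h10]
  have hfix : ∀ x : K, x ^ 11 ^ 10 = x := by
    intro x
    obtain ⟨p, rfl⟩ := AdjoinRoot.mk_surjective x
    induction p using Polynomial.induction_on with
    | C a =>
        rw [AdjoinRoot.mk_C, ← map_pow, Ffix 10 a]
    | add p q hp hq => rw [map_add, add_pow_char_pow, hp, hq]
    | monomial n a _ =>
        rw [map_mul, map_pow, AdjoinRoot.mk_X, AdjoinRoot.mk_C, mul_pow, ← pow_mul,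
          mul_comm (n+1), pow_mul, hβ10, ← map_pow, Ffix 10 a]
  -- hence 11 ^ d - 1 ∣ 11 ^ 10 - 1
  have hdvd : 11 ^ d - 1 ∣ 11 ^ 10 - 1 := by
    rw [← hcard]
    apply (FiniteField.forall_pow_eq_one_iff K _).mp
    intro x
    have hx := hfix (x : K)
    have hx' : (x : K) ^ (11 ^ 10 - 1) * (x : K) = 1 * (x : K) := by
      rw [← pow_succ, one_mul]
      have : 11 ^ 10 - 1 + 1 = 11 ^ 10 := by norm_num
      rw [this, hx]
    have := mul_right_cancel₀ x.ne_zero hx'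
    ext
    push_cast
    exact this
  -- rule out d ∣ 5 and d ∣ 2 cases
  have hKnontriv : (0 : K) ≠ 1 := zero_ne_one
  have hpow : ∀ m : ℕ, d ∣ m → β ^ 11 ^ m = β := by
    intro m ⟨e, he⟩
    have h := FiniteField.pow_card_pow (K := K) e β
    rw [hcard, ← pow_mul] at h
    rw [he]
    exact h
  have hne5 : ¬ d ∣ 5 := by
    intro h
    have h0 : β ^ 11 ^ 5 - β = 0 := by rw [hpow 5 h, sub_self]
    have : IsUnit (β ^ 11 ^ 5 - β) := by
      rw [← hχroot, ← map_pow, ← map_sub]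
      exact h5.map χ
    rw [h0] at this
    exact not_isUnit_zero this
  have hne2 : ¬ d ∣ 2 := by
    intro h
    have h0 : β ^ 11 ^ 2 - β = 0 := by rw [hpow 2 h, sub_self]
    have : IsUnit (β ^ 11 ^ 2 - β) := by
      rw [← hχroot, ← map_pow, ← map_sub]
      exact h2.map χ
    rw [h0] at this
    exact not_isUnit_zero this
  -- conclude d = 10
  have hd' : d = 10 := by
    interval_cases d <;> revert hdvd hne5 hne2 <;> norm_num
  -- f is associated to g
  have hcdeg : c.natDegree = 0 := by
    have hcn0 : c ≠ 0 := by rintro rfl; rw [mul_zero] at hc; exact hf0 hc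
    have := natDegree_mul hg0 hcn0
    rw [← hc, hdeg, ← hd, hd'] at this
    omega
  have hcu : IsUnit c := by
    rw [eq_C_of_natDegree_eq_zero hcdeg]
    apply isUnit_C.mpr
    apply isUnit_iff_ne_zero.mpr
    intro h
    apply hf0
    rw [hc, eq_C_of_natDegree_eq_zero hcdeg, h, map_zero, mul_zero]
  exact (Associated.symm ⟨hcu.unit, by rw [IsUnit.unit_spec, ← hc]⟩ : Associated f g).symm.irreducible hgirr


set_option maxHeartbeats 4000000 in
set_option maxRecDepth 20000 in
lemma certs : (AdjoinRoot.root fF) ^ 11 ^ 10 = AdjoinRoot.root fF ∧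
    IsUnit ((AdjoinRoot.root fF) ^ 11 ^ 5 - AdjoinRoot.root fF) ∧
    IsUnit ((AdjoinRoot.root fF) ^ 11 ^ 2 - AdjoinRoot.root fF) := by
  set a := AdjoinRoot.root fF with ha_def
  have ha : a ^ 10 + 30 * a ^ 9 + 215 * a ^ 8 + 720 * a ^ 7 + 1840 * a ^ 6 + 3024 * a ^ 5 +
      3880 * a ^ 4 + 2880 * a ^ 3 + 1520 * a ^ 2 + 480 * a + 112 = 0 := by
    have h0 : Polynomial.eval₂ (AdjoinRoot.of fF) a (X ^ 10 + 30 * X ^ 9 + 215 * X ^ 8 +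
        720 * X ^ 7 + 1840 * X ^ 6 + 3024 * X ^ 5 + 3880 * X ^ 4 + 2880 * X ^ 3 +
        1520 * X ^ 2 + 480 * X + 112 : F[X]) = 0 := AdjoinRoot.eval₂_root fF
    simpa only [eval₂_add, eval₂_mul, eval₂_pow, eval₂_X, eval₂_ofNat] using h0
  have h11 : (11 : AdjoinRoot fF) = 0 := by
    rw [← map_ofNat (algebraMap F (AdjoinRoot fF)) 11, show (11 : F) = 0 by decide, map_zero]
  have c1 : a ^ 11 ^ 1 = 3 * a ^ 9 + 10 * a ^ 8 + 4 * a ^ 7 + 3 * a ^ 6 + 6 * a ^ 5 + 4 * a ^ 3 + 9 * a ^ 2 + 10 * a + 5 := by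
    rw [pow_one]
    linear_combination (a + 3) * ha + (-3 * a ^ 10 - 28 * a ^ 9 - 125 * a ^ 8 - 364 * a ^ 7 - 777 * a ^ 6 - 1178 * a ^ 5 - 1320 * a ^ 4 - 924 * a ^ 3 - 459 * a ^ 2 - 142 * a - 31) * h11
  have c2 : a ^ 11 ^ 2 = 7 * a ^ 9 + 9 * a ^ 8 + 5 * a ^ 7 + 10 * a ^ 6 + 5 * a ^ 5 + 8 * a ^ 4 + 9 * a ^ 3 + 7 * a ^ 2 + 2 * a + 5 := by
    rw [show (11:ℕ) ^ 2 = 11 ^ 1 * 11 by norm_num, pow_mul, c1]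
    linear_combination (3 * a ^ 89 - 2 * a ^ 88 - 2 * a ^ 87 + 2 * a ^ 86 - 3 * a ^ 85 - 2 * a ^ 84 + 4 * a ^ 83 - 2 * a ^ 82 - 3 * a ^ 81 + 4 * a ^ 80 + 2 * a ^ 78 - 3 * a ^ 77 - 2 * a ^ 76 + 5 * a ^ 75 + a ^ 72 + 3 * a ^ 71 - 5 * a ^ 70 - 2 * a ^ 69 + 4 * a ^ 68 - 2 * a ^ 66 - 2 * a ^ 65 + 3 * a ^ 64 - 5 * a ^ 63 + 5 * a ^ 61 - 5 * a ^ 60 + 5 * a ^ 59 + 5 * a ^ 58 + 4 * a ^ 57 + 4 * a ^ 56 - 5 * a ^ 55 - a ^ 54 + 5 * a ^ 53 + 5 * a ^ 52 + 2 * a ^ 51 - 3 * a ^ 49 + 4 * a ^ 47 - 5 * a ^ 46 - a ^ 45 - 2 * a ^ 44 - a ^ 43 + 3 * a ^ 42 + 4 * a ^ 41 - 4 * a ^ 40 + a ^ 39 + 4 * a ^ 38 - 5 * a ^ 37 - 5 * a ^ 35 - 5 * a ^ 33 + 4 * a ^ 32 + 2 * a ^ 31 - 4 * a ^ 30 + 2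 * a ^ 29 - 2 * a ^ 28 + 5 * a ^ 27 + 2 * a ^ 26 - a ^ 25 - 2 * a ^ 24 - 3 * a ^ 23 + 2 * a ^ 22 + 4 * a ^ 21 + a ^ 20 - a ^ 19 - 4 * a ^ 18 - a ^ 17 + a ^ 16 + 5 * a ^ 15 + 2 * a ^ 14 - 3 * a ^ 13 - a ^ 12 + a ^ 10 + 2 * a ^ 9 - 4 * a ^ 8 + 5 * a ^ 7 - 2 * a ^ 6 + 3 * a ^ 5 - a ^ 4 + 2 * a ^ 3 - a) * ha + (16104 * a ^ 99 + 590482 * a ^ 98 + 10077643 * a ^ 97 + 106465195 * a ^ 96 + 782031497 * a ^ 95 + 4261544070 * a ^ 94 + 18006925970 * a ^ 93 + 61167774951 * a ^ 92 + 172825400535 * a ^ 91 + 420175715858 * a ^ 90 + 907740275979 * a ^ 89 + 1791414723586 * a ^ 88 + 3304045117581 * a ^ 87 + 5807778036787 * a ^ 86 + 9876629235649 * a ^ 85 + 16370663201873 * a ^ 84 + 26478079320405 * a ^ 83 + 41759650616168 * a ^ 82 + 64196194798140 * a ^ 81 + 96276945885990 * a ^ 80 + 141277996644913 * a ^ 79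 + 203602429232339 * a ^ 78 + 288859322527202 * a ^ 77 + 403779371332675 * a ^ 76 + 556055149996119 * a ^ 75 + 754042746842082 * a ^ 74 + 1006908925677427 * a ^ 73 + 1325425174325387 * a ^ 72 + 1722378028490914 * a ^ 71 + 2212035000363427 * a ^ 70 + 2808962047765535 * a ^ 69 + 3526430287023613 * a ^ 68 + 4375299568131251 * a ^ 67 + 5364692370315633 * a ^ 66 + 6503815966347825 * a ^ 65 + 7802326946346705 * a ^ 64 + 9268050650768324 * a ^ 63 + 10903248841028183 * a ^ 62 + 12701338413284492 * a ^ 61 + 14646579361129830 * a ^ 60 + 16718002030463351 * a ^ 59 + 18894307878485855 * a ^ 58 + 21154571527642400 * a ^ 57 + 23473610792103953 * a ^ 56 + 25815893411014769 * a ^ 55 + 28133253306514989 * a ^ 54 + 30369713697269368 * a ^ 53 + 32471742205293722 * a ^ 52 + 34396476210892045 * a ^ 51 + 36110943900452824 * a ^ 50 + 37583558432925189 * a ^ 49 + 38776397669099399 * a ^ 48 + 39646152706959362 * a ^ 47 + 40154701901951200 * a ^ 46 + 40282272387986750 * a ^ 45 + 40032808128146044 * a ^ 44 + 39426697465806329 *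 a ^ 43 + 38486997184928710 * a ^ 42 + 37231026124305569 * a ^ 41 + 35674002631013165 * a ^ 40 + 33840778116093014 * a ^ 39 + 31774967692623386 * a ^ 38 + 29536867944912520 * a ^ 37 + 27190766207050943 * a ^ 36 + 24791166783010678 * a ^ 35 + 22378094126121480 * a ^ 34 + 19983367690906680 * a ^ 33 + 17640543512307642 * a ^ 32 + 15389164230400365 * a ^ 31 + 13269781023463628 * a ^ 30 + 11314172467470368 * a ^ 29 + 9538747298490848 * a ^ 28 + 7945863973391235 * a ^ 27 + 6531028637917062 * a ^ 26 + 5289702020558749 * a ^ 25 + 4218975442822996 * a ^ 24 + 3314414010949434 * a ^ 23 + 2566114879349515 * a ^ 22 + 1957791881153958 * a ^ 21 + 1469546210379632 * a ^ 20 + 1081991521768562 * a ^ 19 + 778853640550024 * a ^ 18 + 546953256569991 * a ^ 17 + 374652415502275 * a ^ 16 + 250591708243848 * a ^ 15 + 163682136465344 * a ^ 14 + 104006737927570 * a ^ 13 + 63678806552662 * a ^ 12 + 37015765689379 * a ^ 11 + 20068098952191 * a ^ 10 + 9960169139513 * a ^ 9 + 4443260155431 * a ^ 8 + 1749390624345 *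 a ^ 7 + 596253906028 * a ^ 6 + 172031250089 * a ^ 5 + 40830078309 * a ^ 4 + 7656250117 * a ^ 3 + 1064453168 * a ^ 2 + 97656260 * a + 4438920) * h11
  have c3 : a ^ 11 ^ 3 = a ^ 9 + 2 * a ^ 8 + a ^ 7 + 5 * a ^ 6 + 2 * a ^ 5 + 4 * a ^ 4 + 5 * a ^ 2 + 3 * a + 5 := by
    rw [show (11:ℕ) ^ 3 = 11 ^ 2 * 11 by norm_num, pow_mul, c2]
    linear_combination (-4 * a ^ 89 - a ^ 88 - a ^ 87 + a ^ 86 + 4 * a ^ 85 - a ^ 84 + 2 * a ^ 83 - a ^ 82 + 4 * a ^ 81 + 2 * a ^ 80 + 5 * a ^ 78 + 5 * a ^ 77 - 4 * a ^ 75 - 4 * a ^ 74 + a ^ 73 + 4 * a ^ 72 - 3 * a ^ 71 - a ^ 70 - 3 * a ^ 69 + 2 * a ^ 68 - 4 * a ^ 67 - 3 * a ^ 66 + 2 * a ^ 65 - 3 * a ^ 64 - 5 * a ^ 63 + 2 * a ^ 62 - 2 * a ^ 61 - 2 * a ^ 60 - 3 * a ^ 59 + 5 * a ^ 58 + 4 *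 a ^ 56 - 3 * a ^ 55 - 2 * a ^ 54 - 5 * a ^ 53 + a ^ 52 + 2 * a ^ 51 - a ^ 49 + 4 * a ^ 48 + 5 * a ^ 47 - 3 * a ^ 46 - 2 * a ^ 45 + 4 * a ^ 44 + 2 * a ^ 43 + 3 * a ^ 41 - 4 * a ^ 40 - 3 * a ^ 39 - 5 * a ^ 38 - a ^ 37 - 4 * a ^ 36 + 5 * a ^ 35 + 3 * a ^ 34 + 3 * a ^ 33 - 2 * a ^ 32 + a ^ 31 - a ^ 30 + a ^ 29 + 2 * a ^ 28 + 2 * a ^ 27 + 4 * a ^ 26 + 3 * a ^ 25 + a ^ 24 - a ^ 23 - 5 * a ^ 22 + 5 * a ^ 21 + 2 * a ^ 20 + 2 * a ^ 19 - a ^ 18 + 4 * a ^ 17 + 3 * a ^ 16 + 2 * a ^ 15 + 4 * a ^ 14 - 2 * a ^ 13 + 4 * a ^ 11 + 2 * a ^ 10 - a ^ 9 + 2 * a ^ 8 + 3 * a ^ 7 + a ^ 6 - 3 * a ^ 5 + 5 * a ^ 4 - 4 * a ^ 3 + 4 * a) * ha + (179756977 * a ^ 99 + 2542277252 * a ^ 98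 + 17755587161 * a ^ 97 + 84021974859 * a ^ 96 + 309936291086 * a ^ 95 + 961085388361 * a ^ 94 + 2617456718447 * a ^ 93 + 6442782230983 * a ^ 92 + 14624863435140 * a ^ 91 + 31050038557377 * a ^ 90 + 62289756496812 * a ^ 89 + 118986265403962 * a ^ 88 + 217691808868088 * a ^ 87 + 383221109620824 * a ^ 86 + 651544660126653 * a ^ 85 + 1073132352543509 * a ^ 84 + 1716648322175319 * a ^ 83 + 2672785828877015 * a ^ 82 + 4057828756423147 * a ^ 81 + 6016590656533158 * a ^ 80 + 8724214058405849 * a ^ 79 + 12386124124062334 * a ^ 78 + 17235734834224238 * a ^ 77 + 23529335600785465 * a ^ 76 + 31537592044413820 * a ^ 75 + 41533804918327687 * a ^ 74 + 53778865142348108 * a ^ 73 + 68503150723943736 * a ^ 72 + 85886650664056695 * a ^ 71 + 106038101029040126 * a ^ 70 + 128974439316223067 * a ^ 69 + 154602887563549714 * a ^ 68 + 182706786936878229 * a ^ 67 + 212936847727085484 * a ^ 66 + 244810011338480462 * a ^ 65 + 277716014032272360 * a ^ 64 + 310932359292271175 * a ^ 63 + 343648303397108270 * a ^ 62 + 374995767894186161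 * a ^ 61 + 404086189783435801 * a ^ 60 + 430051848207032363 * a ^ 59 + 452087702176677132 * a ^ 58 + 469491828304635416 * a ^ 57 + 481702137793621842 * a ^ 56 + 488325334040613363 * a ^ 55 + 489157247516643453 * a ^ 54 + 484193268535007997 * a ^ 53 + 473626834398530526 * a ^ 52 + 457837557089561938 * a ^ 51 + 437369787525930992 * a ^ 50 + 412902135185314235 * a ^ 49 + 385211607566765414 * a ^ 48 + 355134511987370823 * a ^ 47 + 323525864174361640 * a ^ 46 + 291221306312932750 * a ^ 45 + 259003079319353731 * a ^ 44 + 227571318979055505 * a ^ 43 + 197523029715104454 * a ^ 42 + 169338627525920082 * a ^ 41 + 143375728488341269 * a ^ 40 + 119870578595733331 * a ^ 39 + 98945425485665684 * a ^ 38 + 80620454612239801 * a ^ 37 + 64829562125873473 * a ^ 36 + 51437795701487456 * a ^ 35 + 40259263396636169 * a ^ 34 + 31074627361844531 * a ^ 33 + 23646910858822722 * a ^ 32 + 17734926877901208 * a ^ 31 + 13104385726528473 * a ^ 30 + 9536019568107881 * a ^ 29 + 6831170198567028 * a ^ 28 + 4815006683980028 * a ^ 27 + 3337732394647295 * a ^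 26 + 2274109439718609 * a ^ 25 + 1521982866242517 * a ^ 24 + 999882414368055 * a ^ 23 + 644320918538159 * a ^ 22 + 406915363978034 * a ^ 21 + 251629444553856 * a ^ 20 + 152199103635303 * a ^ 19 + 89944293158476 * a ^ 18 + 51864696284020 * a ^ 17 + 29140059488258 * a ^ 16 + 15925412280796 * a ^ 15 + 8451353179548 * a ^ 14 + 4344676067556 * a ^ 13 + 2159119219191 * a ^ 12 + 1033896612542 * a ^ 11 + 475659724343 * a ^ 10 + 209259244146 * a ^ 9 + 87771454570 * a ^ 8 + 34760518523 * a ^ 7 + 12986836877 * a ^ 6 + 4493264579 * a ^ 5 + 1437889701 * a ^ 4 + 408202613 * a ^ 3 + 107421700 * a ^ 2 + 19531209 * a + 4438920) * h11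
  have c4 : a ^ 11 ^ 4 = 7 * a ^ 9 + 4 * a ^ 8 + 9 * a ^ 7 + a ^ 6 + 10 * a ^ 4 + 5 * a ^ 3 + 6 * a ^ 2 + 10 * a + 4 := by
    rw [show (11:ℕ) ^ 4 = 11 ^ 3 * 11 by norm_num, pow_mul, c3]
    linear_combination (a ^ 89 + 3 * a ^ 88 + 3 * a ^ 87 - 3 * a ^ 86 - a ^ 85 + 3 * a ^ 84 + 5 * a ^ 83 + 3 * a ^ 82 - a ^ 81 + 5 * a ^ 80 + 3 * a ^ 78 - 5 * a ^ 77 - a ^ 76 + 2 * a ^ 75 + 5 * a ^ 74 - 4 * a ^ 73 + a ^ 72 - 3 * a ^ 71 - 4 * a ^ 70 + 5 * a ^ 68 + 2 * a ^ 67 + 2 * a ^ 66 + 4 * a ^ 65 - 5 * a ^ 64 + 4 * a ^ 63 + 5 * a ^ 62 + a ^ 61 + 2 * a ^ 60 + a ^ 59 - 5 * a ^ 58 + 2 * a ^ 57 - a ^ 56 - 3 * a ^ 55 + 5 * a ^ 54 + 5 * a ^ 51 - 3 * a ^ 50 - 5 * a ^ 49 - 4 * a ^ 48 + 4 * a ^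 47 - 4 * a ^ 45 - a ^ 44 - 4 * a ^ 43 - a ^ 40 + 4 * a ^ 39 + 5 * a ^ 38 + 4 * a ^ 37 - 2 * a ^ 36 - a ^ 35 - 2 * a ^ 34 - a ^ 33 + 5 * a ^ 32 - 2 * a ^ 31 - 5 * a ^ 30 + 3 * a ^ 29 + 2 * a ^ 28 + 3 * a ^ 27 + a ^ 26 + 5 * a ^ 25 - 5 * a ^ 24 + a ^ 23 + a ^ 22 - a ^ 21 - 5 * a ^ 19 + 4 * a ^ 17 + 3 * a ^ 16 - 5 * a ^ 13 + 2 * a ^ 12 - 3 * a ^ 11 + a ^ 10 + a ^ 9 + a ^ 6 - 5 * a ^ 5 - 3 * a ^ 4 + a ^ 3 + 5 * a ^ 2 - 4 * a - 5) * ha + (-a ^ 98 - 7 * a ^ 97 + 13 * a ^ 96 + 353 * a ^ 95 + 2476 * a ^ 94 + 11596 * a ^ 93 + 43474 * a ^ 92 + 140796 * a ^ 91 + 412842 * a ^ 90 + 1122803 * a ^ 89 + 2871553 * a ^ 88 + 6955208 * a ^ 87 + 16033578 * a ^ 86 + 35334777 * a ^ 85 + 74733017 * a ^ 84 + 152196865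 * a ^ 83 + 299330457 * a ^ 82 + 569969272 * a ^ 81 + 1053134759 * a ^ 80 + 1891991991 * a ^ 79 + 3310691945 * a ^ 78 + 5651590099 * a ^ 77 + 9424926489 * a ^ 76 + 15373889858 * a ^ 75 + 24556911961 * a ^ 74 + 38448357396 * a ^ 73 + 59059787751 * a ^ 72 + 89076068177 * a ^ 71 + 132010526997 * a ^ 70 + 192361434518 * a ^ 69 + 275772211594 * a ^ 68 + 389175503059 * a ^ 67 + 540891734841 * a ^ 66 + 740716025157 * a ^ 65 + 999845195814 * a ^ 64 + 1330859084253 * a ^ 63 + 1747352685505 * a ^ 62 + 2263741029202 * a ^ 61 + 2894574375892 * a ^ 60 + 3653962642495 * a ^ 59 + 4554926380234 * a ^ 58 + 5607807266422 * a ^ 57 + 6820883649146 * a ^ 56 + 8196130093697 * a ^ 55 + 9733953775269 * a ^ 54 + 11422800504061 * a ^ 53 + 13253407531977 * a ^ 52 + 15195881593395 * a ^ 51 + 17232229167459 * a ^ 50 + 19310847160289 * a ^ 49 + 21409780732153 * a ^ 48 + 23454743739580 * a ^ 47 + 25428634854181 * a ^ 46 + 27236424819207 * a ^ 45 + 28877695143316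 * a ^ 44 + 30241395920089 * a ^ 43 + 31356356196899 * a ^ 42 + 32102193913916 * a ^ 41 + 32547175622291 * a ^ 40 + 32568863236914 * a ^ 39 + 32279690368521 * a ^ 38 + 31561562318186 * a ^ 37 + 30568389877121 * a ^ 36 + 29190819305881 * a ^ 35 + 27613931807174 * a ^ 34 + 25738965465071 * a ^ 33 + 23766008738006 * a ^ 32 + 21606427484052 * a ^ 31 + 19456715435433 * a ^ 30 + 17236606118170 * a ^ 29 + 15121981465807 * a ^ 28 + 13038951236356 * a ^ 27 + 11130499970706 * a ^ 26 + 9327769535235 * a ^ 25 + 7735250297100 * a ^ 24 + 6289099136908 * a ^ 23 + 5056476159710 * a ^ 22 + 3979648095373 * a ^ 21 + 3094574328214 * a ^ 20 + 2351094226283 * a ^ 19 + 1762631392038 * a ^ 18 + 1287974282798 * a ^ 17 + 927094912960 * a ^ 16 + 648428885229 * a ^ 15 + 445772024840 * a ^ 14 + 296578937779 * a ^ 13 + 193283613421 * a ^ 12 + 121150432428 * a ^ 11 + 73986261563 * a ^ 10 + 43087562288 * a ^ 9 + 24283131477 * a ^ 8 + 12879460076 * a ^ 7 + 6510525533 * a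 ^ 6 + 2997360895 * a ^ 5 + 1264064606 * a ^ 4 + 451173508 * a ^ 3 + 136719564 * a ^ 2 + 29297133 * a + 4438971) * h11
  have c5 : a ^ 11 ^ 5 = 8 * a ^ 9 + 10 * a ^ 8 + 8 * a ^ 7 + 8 * a ^ 6 + 3 * a ^ 5 + 2 * a ^ 4 + a ^ 3 + 2 * a ^ 2 + 8 * a + 9 := by
    rw [show (11:ℕ) ^ 5 = 11 ^ 4 * 11 by norm_num, pow_mul, c4]
    linear_combination (-4 * a ^ 89 - a ^ 88 - a ^ 87 + a ^ 86 + 4 * a ^ 85 - a ^ 84 + 2 * a ^ 83 - a ^ 82 + 4 * a ^ 81 + 2 * a ^ 80 + a ^ 77 - 4 * a ^ 76 + a ^ 74 - 3 * a ^ 73 + a ^ 72 + 4 * a ^ 71 + 4 * a ^ 70 + 5 * a ^ 69 + 2 * a ^ 68 - 5 * a ^ 67 - 2 * a ^ 66 + 5 * a ^ 65 - 2 * a ^ 62 - 3 * a ^ 61 + 3 * a ^ 59 - 2 * a ^ 58 - 3 * a ^ 57 + 4 * a ^ 56 - 3 * a ^ 55 + a ^ 53 - 5 * a ^ 52 + a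 ^ 51 + 3 * a ^ 50 + 5 * a ^ 49 - 3 * a ^ 48 + 2 * a ^ 47 + 2 * a ^ 46 + 5 * a ^ 45 - a ^ 44 - 3 * a ^ 42 + 5 * a ^ 41 + 5 * a ^ 40 + 3 * a ^ 39 + 2 * a ^ 38 + 3 * a ^ 37 + 3 * a ^ 36 + 5 * a ^ 35 - 3 * a ^ 32 - 4 * a ^ 31 + 2 * a ^ 30 - 4 * a ^ 29 - 5 * a ^ 28 + 4 * a ^ 27 + 2 * a ^ 26 + 4 * a ^ 25 - 5 * a ^ 24 + 4 * a ^ 23 + 5 * a ^ 22 - a ^ 21 + 3 * a ^ 20 + 2 * a ^ 19 - 3 * a ^ 18 - a ^ 17 - 4 * a ^ 16 - a ^ 15 + 5 * a ^ 14 + a ^ 13 + 3 * a ^ 12 - a ^ 10 + 3 * a ^ 9 - 3 * a ^ 8 + 4 * a ^ 7 + a ^ 6 - a ^ 5 + a ^ 4 - 5 * a ^ 3 + 2 * a + 3) * ha + (179756977 * a ^ 99 + 1129901007 * a ^ 98 + 5770565882 * a ^ 97 + 20343983013 * a ^ 96 + 61638076586 * a ^ 95 + 156641174074 * a ^ 94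 + 357727198231 * a ^ 93 + 743200266263 * a ^ 92 + 1444441901063 * a ^ 91 + 2679661877998 * a ^ 90 + 4780384390311 * a ^ 89 + 8290178582522 * a ^ 88 + 13951246965999 * a ^ 87 + 22844282772508 * a ^ 86 + 36440326555578 * a ^ 85 + 56704966310918 * a ^ 84 + 86445081945708 * a ^ 83 + 129236445476318 * a ^ 82 + 189879153928965 * a ^ 81 + 274354132510880 * a ^ 80 + 389813335721814 * a ^ 79 + 545295963495286 * a ^ 78 + 751203905981471 * a ^ 77 + 1020271538495573 * a ^ 76 + 1367425300083108 * a ^ 75 + 1808899635093739 * a ^ 74 + 2363343819785305 * a ^ 73 + 3049715064798731 * a ^ 72 + 3887993068795446 * a ^ 71 + 4899554298283168 * a ^ 70 + 6104299313220514 * a ^ 69 + 7522691143659262 * a ^ 68 + 9172115103389163 * a ^ 67 + 11064880440788983 * a ^ 66 + 13210379514771850 * a ^ 65 + 15609710027454646 * a ^ 64 + 18258539755843328 * a ^ 63 + 21146704515297103 * a ^ 62 + 24252301227462573 * a ^ 61 + 27546693588583733 * a ^ 60 + 30989784773065290 * a ^ 59 + 34529602627010440 * a ^ 58 + 38110171657766980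 * a ^ 57 + 41665971108046389 * a ^ 56 + 45127326780882315 * a ^ 55 + 48424171236510009 * a ^ 54 + 51479621609129601 * a ^ 53 + 54219894089927124 * a ^ 52 + 56575837441373484 * a ^ 51 + 58481912303539366 * a ^ 50 + 59887865139852469 * a ^ 49 + 60754822270763990 * a ^ 48 + 61054867312872895 * a ^ 47 + 60778202541437327 * a ^ 46 + 59926571705642381 * a ^ 45 + 58516510530444974 * a ^ 44 + 56584014696056220 * a ^ 43 + 54176752381246784 * a ^ 42 + 51355502669966139 * a ^ 41 + 48192350960572459 * a ^ 40 + 44761850643512654 * a ^ 39 + 41142523674862843 * a ^ 38 + 37414769457861001 * a ^ 37 + 33655095837120916 * a ^ 36 + 29937409170488136 * a ^ 35 + 26329497581130551 * a ^ 34 + 22888004728392061 * a ^ 33 + 19659671478625108 * a ^ 32 + 16680050677732251 * a ^ 31 + 13972249061322564 * a ^ 30 + 11549845813164013 * a ^ 29 + 9417340007152966 * a ^ 28 + 7569800179870047 * a ^ 27 + 5995112743581885 * a ^ 26 + 4675252245191976 * a ^ 25 + 3587175697621527 * a ^ 24 + 2705272900864608 * a ^ 23 + 2003169749615532 * a ^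 22 + 1454562732100853 * a ^ 21 + 1034319123560708 * a ^ 20 + 719238747366569 * a ^ 19 + 488286998585752 * a ^ 18 + 322945109160603 * a ^ 17 + 207512753226380 * a ^ 16 + 129080703545637 * a ^ 15 + 77353942460682 * a ^ 14 + 44389721819330 * a ^ 13 + 24218835784901 * a ^ 12 + 12456414310259 * a ^ 11 + 5978561113435 * a ^ 10 + 2646392021144 * a ^ 9 + 1065372402475 * a ^ 8 + 383144363008 * a ^ 7 + 120186863768 * a ^ 6 + 31876709527 * a ^ 5 + 6873414306 * a ^ 4 + 1145568269 * a ^ 3 + 137362954 * a ^ 2 + 10485608 * a + 381269) * h11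
  have c6 : a ^ 11 ^ 6 = 10 * a ^ 9 + 10 * a ^ 7 + 3 * a ^ 6 + 10 * a ^ 5 + 2 * a ^ 4 + 3 * a ^ 2 + 8 * a + 7 := by
    rw [show (11:ℕ) ^ 6 = 11 ^ 5 * 11 by norm_num, pow_mul, c5]
    linear_combination (-3 * a ^ 89 + 2 * a ^ 88 + 2 * a ^ 87 - 2 * a ^ 86 + 3 * a ^ 85 + 2 * a ^ 84 - 4 * a ^ 83 + 2 * a ^ 82 + 3 * a ^ 81 - 4 * a ^ 80 - 4 * a ^ 78 - 3 * a ^ 77 - 4 * a ^ 76 + a ^ 75 + 2 * a ^ 74 + 5 * a ^ 73 + 2 * a ^ 71 - 4 * a ^ 70 + 3 * a ^ 69 - 4 * a ^ 68 - a ^ 67 + 5 * a ^ 66 - 3 * a ^ 65 + a ^ 63 + a ^ 62 - 4 * a ^ 61 + 4 * a ^ 60 - 2 * a ^ 59 - 2 * a ^ 58 - 3 * a ^ 57 - a ^ 56 - 4 * a ^ 55 - 3 * a ^ 54 - 5 * a ^ 53 - 2 * a ^ 52 - a ^ 51 - 4 * a ^ 50 + 4 * a ^ 49 - 3 * a ^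 48 - a ^ 47 + 4 * a ^ 46 - 3 * a ^ 45 + 5 * a ^ 44 - a ^ 43 - 2 * a ^ 42 + a ^ 41 - 2 * a ^ 40 - 2 * a ^ 39 - 2 * a ^ 38 - 2 * a ^ 37 - 4 * a ^ 36 - 3 * a ^ 35 - 5 * a ^ 34 - 2 * a ^ 33 - 4 * a ^ 32 + 3 * a ^ 31 - 5 * a ^ 30 + 4 * a ^ 29 - 2 * a ^ 28 + 4 * a ^ 27 + a ^ 26 - 4 * a ^ 25 - 5 * a ^ 24 - 3 * a ^ 23 - 3 * a ^ 22 - a ^ 21 + 5 * a ^ 20 - 5 * a ^ 19 + 5 * a ^ 18 + 5 * a ^ 17 + 4 * a ^ 16 - 5 * a ^ 15 - a ^ 14 - a ^ 13 - 2 * a ^ 12 + 4 * a ^ 11 - 2 * a ^ 10 - 5 * a ^ 9 + 4 * a ^ 8 + 5 * a ^ 7 + 3 * a ^ 6 - a ^ 5 - 4 * a ^ 4 + a ^ 3 - a ^ 2 - 2 * a + 1) * ha + (780903145 * a ^ 99 + 10737418248 * a ^ 98 + 75698798645 * a ^ 97 + 367622357144 * a ^ 96 + 1386670457169 * a ^ 95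 + 4329746465158 * a ^ 94 + 11634248515825 * a ^ 93 + 27612951871128 * a ^ 92 + 58987888114887 * a ^ 91 + 115095740644468 * a ^ 90 + 207665801272417 * a ^ 89 + 350363901706496 * a ^ 88 + 558612927995665 * a ^ 87 + 850270174019470 * a ^ 86 + 1247326255688988 * a ^ 85 + 1777953581190564 * a ^ 84 + 2477428965160312 * a ^ 83 + 3386413246797428 * a ^ 82 + 4546272999275401 * a ^ 81 + 5993150946371384 * a ^ 80 + 7754064333556861 * a ^ 79 + 9847954123617650 * a ^ 78 + 12291722579839684 * a ^ 77 + 15107268601512655 * a ^ 76 + 18323195566305420 * a ^ 75 + 21966759110093013 * a ^ 74 + 26047870092174612 * a ^ 73 + 30543854485763027 * a ^ 72 + 35395836076112501 * a ^ 71 + 40522081863125279 * a ^ 70 + 45842388414871930 * a ^ 69 + 51297965234531766 * a ^ 68 + 56851415240386495 * a ^ 67 + 62463379278901171 * a ^ 66 + 68059822448452373 * a ^ 65 + 73514198039754638 * a ^ 64 + 78662040487579089 * a ^ 63 + 83344481438794839 * a ^ 62 + 87455207902681108 * a ^ 61 + 90958901449518960 * a ^ 60 + 93866109112391181 * a ^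 59 + 96179805595668399 * a ^ 58 + 97851341824260469 * a ^ 57 + 98780248392404893 * a ^ 56 + 98862408154179095 * a ^ 55 + 98055417862818687 * a ^ 54 + 96415206463973273 * a ^ 53 + 94075665656596637 * a ^ 52 + 91182857962746797 * a ^ 51 + 87828788671900129 * a ^ 50 + 84030876489244772 * a ^ 49 + 79770833520535946 * a ^ 48 + 75063330278086010 * a ^ 47 + 70002986833611119 * a ^ 46 + 64755115183776908 * a ^ 45 + 59496867688350147 * a ^ 44 + 54350602328156782 * a ^ 43 + 49355788536526075 * a ^ 42 + 44496108923840755 * a ^ 41 + 39758049534790560 * a ^ 40 + 35176599419985184 * a ^ 39 + 30836292507445737 * a ^ 38 + 26831108006239235 * a ^ 37 + 23216070259800397 * a ^ 36 + 19985414895021825 * a ^ 35 + 17089811990004841 * a ^ 34 + 14476389212484736 * a ^ 33 + 12121033069950412 * a ^ 32 + 10032170010285234 * a ^ 31 + 8228506960807325 * a ^ 30 + 6711378171436215 * a ^ 29 + 5452838787867136 * a ^ 28 + 4405309691146747 * a ^ 27 + 3522254332510921 * a ^ 26 + 2774008522500346 * a ^ 25 + 2149219406212248 * a ^ 24 + 1644192627419878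 * a ^ 23 + 1250516077120275 * a ^ 22 + 950169990352235 * a ^ 21 + 719810339459866 * a ^ 20 + 538813855229759 * a ^ 19 + 394333947393980 * a ^ 18 + 280758805404808 * a ^ 17 + 195568003680033 * a ^ 16 + 135314920223059 * a ^ 15 + 94336947163583 * a ^ 14 + 66175196633855 * a ^ 13 + 45736267321617 * a ^ 12 + 30295600675154 * a ^ 11 + 18914552533129 * a ^ 10 + 11208680978177 * a ^ 9 + 6546762897817 * a ^ 8 + 3973073623710 * a ^ 7 + 2532056845684 * a ^ 6 + 1585287972297 * a ^ 5 + 881395961688 * a ^ 4 + 396072879969 * a ^ 3 + 130948125241 * a ^ 2 + 27894275184 * a + 2852823590) * h11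
  have c7 : a ^ 11 ^ 7 = 4 * a ^ 9 + 2 * a ^ 8 + 4 * a ^ 7 + 2 * a ^ 6 + 6 * a ^ 5 + 10 * a ^ 4 + 6 * a ^ 3 + 7 * a ^ 2 + 7 * a + 7 := by
    rw [show (11:ℕ) ^ 7 = 11 ^ 6 * 11 by norm_num, pow_mul, c6]
    linear_combination (-a ^ 89 - 3 * a ^ 88 - 3 * a ^ 87 + 3 * a ^ 86 + a ^ 85 - 3 * a ^ 84 - 5 * a ^ 83 - 3 * a ^ 82 + a ^ 81 - 5 * a ^ 80 - a ^ 78 - 4 * a ^ 76 + 3 * a ^ 75 + 4 * a ^ 74 - a ^ 73 - 2 * a ^ 72 - 2 * a ^ 71 + 2 * a ^ 70 - a ^ 69 - 5 * a ^ 68 - 2 * a ^ 66 + 4 * a ^ 65 - a ^ 64 - a ^ 63 - 3 * a ^ 62 + 3 * a ^ 61 + 2 * a ^ 60 - 5 * a ^ 59 - 4 * a ^ 58 - 3 * a ^ 57 - 4 * a ^ 56 + 3 * a ^ 55 + 5 * a ^ 54 - 5 * a ^ 53 - 4 * a ^ 52 - 3 * a ^ 51 + 5 * a ^ 50 - 3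 * a ^ 49 - 3 * a ^ 48 + a ^ 47 - 5 * a ^ 46 + 3 * a ^ 45 + 5 * a ^ 44 - 5 * a ^ 43 + 4 * a ^ 42 - a ^ 41 + a ^ 40 + a ^ 38 + 5 * a ^ 37 - 3 * a ^ 36 - 3 * a ^ 35 + a ^ 34 - 3 * a ^ 33 + 3 * a ^ 32 - 4 * a ^ 31 - 2 * a ^ 30 + 3 * a ^ 29 - 5 * a ^ 28 + 2 * a ^ 27 - 4 * a ^ 26 - 2 * a ^ 24 + a ^ 23 + 2 * a ^ 22 - 4 * a ^ 21 - 5 * a ^ 20 - a ^ 18 + 4 * a ^ 17 + 5 * a ^ 16 - 5 * a ^ 15 - 4 * a ^ 14 - 5 * a ^ 13 + 2 * a ^ 12 - 3 * a ^ 11 + 2 * a ^ 10 - 3 * a ^ 9 + 2 * a ^ 8 + 2 * a ^ 7 - 4 * a ^ 6 - 2 * a ^ 5 + 5 * a ^ 4 - 4 * a ^ 3 - 5 * a ^ 2 + 2 * a) * ha + (9090909091 * a ^ 99 + 3 * a ^ 98 + 100000000028 * a ^ 97 + 30000000132 * a ^ 96 + 600000000414 * a ^ 95 + 320000000912 * a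 ^ 94 + 2545000001472 * a ^ 93 + 1880000001650 * a ^ 92 + 8545000001292 * a ^ 91 + 7810500000796 * a ^ 90 + 24175000001269 * a ^ 89 + 25645000002452 * a ^ 88 + 60104300003298 * a ^ 87 + 70611500003289 * a ^ 86 + 135113900002695 * a ^ 85 + 169493706002402 * a ^ 84 + 280055000001820 * a ^ 83 + 363900956001428 * a ^ 82 + 541694561800831 * a ^ 81 + 712047636000216 * a ^ 80 + 985040336199265 * a ^ 79 + 1287343706099071 * a ^ 78 + 1691478396708943 * a ^ 77 + 2173975985000703 * a ^ 76 + 2752073479616112 * a ^ 75 + 3457634154501237 * a ^ 74 + 4253718543326633 * a ^ 73 + 5212527775743452 * a ^ 72 + 6261664280771354 * a ^ 71 + 7483166253652603 * a ^ 70 + 8798091322495406 * a ^ 69 + 10266783145580188 * a ^ 68 + 11827269697793540 * a ^ 67 + 13497219017589163 * a ^ 66 + 15242674162691276 * a ^ 65 + 17037721347666785 * a ^ 64 + 18870127359639758 * a ^ 63 + 20683105935373664 * a ^ 62 + 22473638964806300 * a ^ 61 + 24177186748546642 * a ^ 60 + 25785945123284648 * a ^ 59 + 27243235966850281 * a ^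 58 + 28532509481217666 * a ^ 57 + 29617859631653176 * a ^ 56 + 30476393361467186 * a ^ 55 + 31090214000395276 * a ^ 54 + 31439655042241012 * a ^ 53 + 31526584242329826 * a ^ 52 + 31342822006579888 * a ^ 51 + 30899492778977236 * a ^ 50 + 30202999786663231 * a ^ 49 + 29276254737362365 * a ^ 48 + 28140863186226567 * a ^ 47 + 26822058463048348 * a ^ 46 + 25349360708542198 * a ^ 45 + 23755421832395328 * a ^ 44 + 22076355621839454 * a ^ 43 + 20342163463547980 * a ^ 42 + 18583820151612913 * a ^ 41 + 16831426504672611 * a ^ 40 + 15114341166917579 * a ^ 39 + 13455045847881885 * a ^ 38 + 11871261924018775 * a ^ 37 + 10379911078279457 * a ^ 36 + 8995425237203220 * a ^ 35 + 7726235068437791 * a ^ 34 + 6574320655691335 * a ^ 33 + 5540361692260146 * a ^ 32 + 4624515828868271 * a ^ 31 + 3823571453944052 * a ^ 30 + 3129930745015536 * a ^ 29 + 2535055843942557 * a ^ 28 + 2031720479942140 * a ^ 27 + 1611957624769021 * a ^ 26 + 1265454907925109 * a ^ 25 + 981517437527567 * a ^ 24 + 751650365918862 * a ^ 23 + 568870049928354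 * a ^ 22 + 425720123343326 * a ^ 21 + 314455982803537 * a ^ 20 + 228739660106970 * a ^ 19 + 163963729827360 * a ^ 18 + 116045474879171 * a ^ 17 + 80908145978533 * a ^ 16 + 55208497381680 * a ^ 15 + 36803407110752 * a ^ 14 + 24172066260346 * a ^ 13 + 15757876781371 * a ^ 12 + 10079434135434 * a ^ 11 + 6164262174446 * a ^ 10 + 3563990335186 * a ^ 9 + 1998507134640 * a ^ 8 + 1133193359218 * a ^ 7 + 645113234126 * a ^ 6 + 341669873712 * a ^ 5 + 153385707583 * a ^ 4 + 53958537342 * a ^ 3 + 13760579950 * a ^ 2 + 2259801971 * a + 179756976) * h11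
  have c8 : a ^ 11 ^ 8 = 3 * a ^ 9 + 5 * a ^ 8 + 3 * a ^ 7 + 9 * a ^ 6 + a ^ 5 + 2 * a ^ 4 + 9 * a ^ 3 + 9 * a ^ 2 + 8 * a + 6 := by
    rw [show (11:ℕ) ^ 8 = 11 ^ 7 * 11 by norm_num, pow_mul, c7]
    linear_combination (4 * a ^ 89 + a ^ 88 + a ^ 87 - a ^ 86 - 4 * a ^ 85 + a ^ 84 - 2 * a ^ 83 + a ^ 82 - 4 * a ^ 81 - 2 * a ^ 80 - 5 * a ^ 78 - 5 * a ^ 77 + 4 * a ^ 75 + 4 * a ^ 74 - a ^ 73 - 4 * a ^ 72 + 3 * a ^ 71 + a ^ 70 + 3 * a ^ 69 - 2 * a ^ 68 + 2 * a ^ 67 - 3 * a ^ 66 + 3 * a ^ 65 - 2 * a ^ 64 - 4 * a ^ 63 + 3 * a ^ 62 + 3 * a ^ 61 - 4 * a ^ 60 + 5 * a ^ 59 - 4 * a ^ 58 - 5 * a ^ 56 - 5 * a ^ 55 - 3 * a ^ 54 - 3 * a ^ 53 - 5 * a ^ 52 - a ^ 51 + a ^ 50 - a ^ 48 - 2 *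 a ^ 47 + 4 * a ^ 46 + 5 * a ^ 45 - 2 * a ^ 44 + 5 * a ^ 43 + 5 * a ^ 40 - a ^ 39 - 5 * a ^ 38 - 2 * a ^ 37 - 4 * a ^ 36 + 5 * a ^ 35 + 2 * a ^ 34 + 5 * a ^ 33 + 5 * a ^ 32 - 5 * a ^ 31 - 3 * a ^ 30 - 2 * a ^ 29 - 2 * a ^ 28 + 5 * a ^ 27 + 2 * a ^ 26 + 5 * a ^ 25 + 2 * a ^ 24 - 4 * a ^ 23 + 4 * a ^ 22 + 4 * a ^ 21 + 3 * a ^ 20 - 5 * a ^ 19 - 2 * a ^ 17 - 3 * a ^ 16 + 3 * a ^ 15 - a ^ 14 - 4 * a ^ 13 - 4 * a ^ 12 + 2 * a ^ 11 - 5 * a ^ 10 - a ^ 9 + 4 * a ^ 8 + 5 * a ^ 7 + 2 * a ^ 6 + 5 * a ^ 5 + 3 * a ^ 4 - a ^ 3 - 3 * a - 5) * ha + (381300 * a ^ 99 + 2097141 * a ^ 98 + 9437103 * a ^ 97 + 30932708 * a ^ 96 + 92798225 * a ^ 95 + 249297642 * a ^ 94 + 632944976 * a ^ 93 + 1510669076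 * a ^ 92 + 3433938692 * a ^ 91 + 7479862081 * a ^ 90 + 15685015032 * a ^ 89 + 31841117809 * a ^ 88 + 62658893345 * a ^ 87 + 119958269667 * a ^ 86 + 223760716125 * a ^ 85 + 407595125532 * a ^ 84 + 726015112295 * a ^ 83 + 1266155927722 * a ^ 82 + 2164607274236 * a ^ 81 + 3631016111491 * a ^ 80 + 5982079253294 * a ^ 79 + 9686143751747 * a ^ 78 + 15425499303591 * a ^ 77 + 24175562869039 * a ^ 76 + 37308427953411 * a ^ 75 + 56720788028287 * a ^ 74 + 84990327233881 * a ^ 73 + 125564348726281 * a ^ 72 + 182972844652397 * a ^ 71 + 263071440432759 * a ^ 70 + 373294546538722 * a ^ 69 + 522921448960734 * a ^ 68 + 723322807461599 * a ^ 67 + 988170693335499 * a ^ 66 + 1333581472548425 * a ^ 65 + 1778153404568388 * a ^ 64 + 2342873391221560 * a ^ 63 + 3050825139975100 * a ^ 62 + 3926691849181348 * a ^ 61 + 4995998014263256 * a ^ 60 + 6284095012087299 * a ^ 59 + 7814859610793286 * a ^ 58 + 9609130990390792 * a ^ 57 + 11682950543815589 * a ^ 56 + 14045652296988747 * a ^ 55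 + 16697926462961864 * a ^ 54 + 19629940524680956 * a ^ 53 + 22819731906366800 * a ^ 52 + 26231996964069175 * a ^ 51 + 29817444356637873 * a ^ 50 + 33512844623836505 * a ^ 49 + 37241915657889824 * a ^ 48 + 40917146474848565 * a ^ 47 + 44442500203745657 * a ^ 46 + 47716971235512787 * a ^ 45 + 50638847072110868 * a ^ 44 + 53110519948788860 * a ^ 43 + 55043496715325053 * a ^ 42 + 56363281018603060 * a ^ 41 + 57013819671271914 * a ^ 40 + 56961175425548373 * a ^ 39 + 56196096387521761 * a ^ 38 + 54735183062417887 * a ^ 37 + 52620593195121658 * a ^ 36 + 49918243703483956 * a ^ 35 + 46714575986473954 * a ^ 34 + 43112046771541811 * a ^ 33 + 39223716604853254 * a ^ 32 + 35167356711644760 * a ^ 31 + 31059444778807767 * a ^ 30 + 27009472439641253 * a ^ 29 + 23114991136618669 * a ^ 28 + 19457763132913599 * a ^ 27 + 16101172356477385 * a ^ 26 + 13088982684490429 * a ^ 25 + 10445455595132170 * a ^ 24 + 8176712950397919 * a ^ 23 + 6273075990202558 * a ^ 22 + 4712066924809917 * a ^ 21 + 3461793895364145 * a ^ 20 + 2484411678823448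 * a ^ 19 + 1739357268805563 * a ^ 18 + 1186129077044657 * a ^ 17 + 786496841339459 * a ^ 16 + 506081340088770 * a ^ 15 + 315291929643970 * a ^ 14 + 189684041146231 * a ^ 13 + 109857681325119 * a ^ 12 + 61026489964561 * a ^ 11 + 32373808037097 * a ^ 10 + 16313585518933 * a ^ 9 + 7756891396027 * a ^ 8 + 3450475519709 * a ^ 7 + 1419922370778 * a ^ 6 + 532465846754 * a ^ 5 + 177959409432 * a ^ 4 + 51128021802 * a ^ 3 + 11863961279 * a ^ 2 + 1977326991 * a + 179757027) * h11
  have c9 : a ^ 11 ^ 9 = a ^ 9 + 2 * a ^ 8 + 3 * a ^ 6 + 6 * a ^ 4 + 10 * a ^ 3 + 7 * a ^ 2 + 9 * a + 10 := by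
    rw [show (11:ℕ) ^ 9 = 11 ^ 8 * 11 by norm_num, pow_mul, c8]
    linear_combination (3 * a ^ 89 - 2 * a ^ 88 - 2 * a ^ 87 + 2 * a ^ 86 - 3 * a ^ 85 - 2 * a ^ 84 + 4 * a ^ 83 - 2 * a ^ 82 - 3 * a ^ 81 + 4 * a ^ 80 - 3 * a ^ 78 + 4 * a ^ 77 + 5 * a ^ 76 - 2 * a ^ 75 + 5 * a ^ 74 - 4 * a ^ 73 - 2 * a ^ 72 - a ^ 71 - 5 * a ^ 69 + 4 * a ^ 68 + 5 * a ^ 67 - 5 * a ^ 66 - 3 * a ^ 65 - a ^ 64 + 5 * a ^ 63 + 3 * a ^ 62 + a ^ 61 + 4 * a ^ 60 + 5 * a ^ 59 - 5 * a ^ 58 + a ^ 57 + 3 * a ^ 56 - 4 * a ^ 55 + 4 * a ^ 54 + 3 * a ^ 53 + 4 * a ^ 52 - 3 * a ^ 51 + 2 * a ^ 50 + 5 * a ^ 49 - a ^ 48 + 5 * a ^ 47 - 3 * a ^ 46 + 4 * a ^ 45 - 2 * a ^ 44 + 4 * a ^ 43 + a ^ 42 + 2 * a ^ 41 - 2 *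 a ^ 40 + 5 * a ^ 37 + 5 * a ^ 36 - 4 * a ^ 34 + 2 * a ^ 33 - 3 * a ^ 32 - 4 * a ^ 31 + 4 * a ^ 30 - 3 * a ^ 29 - 4 * a ^ 28 + 3 * a ^ 27 + 3 * a ^ 26 - 3 * a ^ 25 + 4 * a ^ 24 + 2 * a ^ 23 - a ^ 22 - 3 * a ^ 21 - 3 * a ^ 20 + 4 * a ^ 19 + 4 * a ^ 18 + 4 * a ^ 17 + 4 * a ^ 16 + 4 * a ^ 15 + 2 * a ^ 14 + 2 * a ^ 13 + 2 * a ^ 12 + 4 * a ^ 11 + 4 * a ^ 9 + 2 * a ^ 8 + 4 * a ^ 7 - 2 * a ^ 6 + 4 * a ^ 5 - a ^ 4 + 3 * a ^ 3 - 2 * a ^ 2 - 3 * a - 2) * ha + (16104 * a ^ 99 + 295237 * a ^ 98 + 2637469 * a ^ 97 + 15785614 * a ^ 96 + 72951422 * a ^ 95 + 280228668 * a ^ 94 + 931147085 * a ^ 93 + 2748640671 * a ^ 92 + 7357412832 * a ^ 91 + 18134620172 * a ^ 90 + 41671816086 * a ^ 89 + 90243136291 * a ^ 88 + 185792321862 *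 a ^ 87 + 366246711830 * a ^ 86 + 695375342295 * a ^ 85 + 1277199519012 * a ^ 84 + 2276732313855 * a ^ 83 + 3949422278504 * a ^ 82 + 6680115134282 * a ^ 81 + 11036274086537 * a ^ 80 + 17839259429293 * a ^ 79 + 28251410715609 * a ^ 78 + 43889803362841 * a ^ 77 + 66962188158781 * a ^ 76 + 100413599579241 * a ^ 75 + 148112269694899 * a ^ 74 + 215042266379657 * a ^ 73 + 307495985366719 * a ^ 72 + 433318943464085 * a ^ 71 + 602083605747564 * a ^ 70 + 825227279574629 * a ^ 69 + 1116204622444001 * a ^ 68 + 1490419271093509 * a ^ 67 + 1965154143210335 * a ^ 66 + 2559458457629996 * a ^ 65 + 3293638442579402 * a ^ 64 + 4188804169922426 * a ^ 63 + 5266138401655617 * a ^ 62 + 6545663950371073 * a ^ 61 + 8045345420064776 * a ^ 60 + 9779826300792914 * a ^ 59 + 11758919821482335 * a ^ 58 + 13986645012685605 * a ^ 57 + 16459567421222727 * a ^ 56 + 19165268788416209 * a ^ 55 + 22081708389612110 * a ^ 54 + 25176234525067335 * a ^ 53 + 28405669045580570 * a ^ 52 + 31717213844798167 * a ^ 51 +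 35048714451463127 * a ^ 50 + 38330061912488776 * a ^ 49 + 41485150219213685 * a ^ 48 + 44433943728352841 * a ^ 47 + 47096331075903364 * a ^ 46 + 49395882770130513 * a ^ 45 + 51262877302391084 * a ^ 44 + 52637585925777573 * a ^ 43 + 53472513582396691 * a ^ 42 + 53734598392256457 * a ^ 41 + 53408056622401611 * a ^ 40 + 52495987376784295 * a ^ 39 + 51020785464061082 * a ^ 38 + 49023125382725733 * a ^ 37 + 46559169586113509 * a ^ 36 + 43697748998116872 * a ^ 35 + 40517816074018281 * a ^ 34 + 37105542139533944 * a ^ 33 + 33551042017594022 * a ^ 32 + 29944138884206391 * a ^ 31 + 26369663394017719 * a ^ 30 + 22903682661946200 * a ^ 29 + 19611061801886730 * a ^ 28 + 16544298375184340 * a ^ 27 + 13743114745669021 * a ^ 26 + 11234096348654064 * a ^ 25 + 9030542028679693 * a ^ 24 + 7133058584280299 * a ^ 23 + 5531145660105641 * a ^ 22 + 4205647319017166 * a ^ 21 + 3131457232468236 * a ^ 20 + 2279868010819540 * a ^ 19 + 1620410375865750 * a ^ 18 + 1122328446058684 * a ^ 17 + 755906614123212 * a ^ 16 + 493705501846292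 * a ^ 15 + 311540129127173 * a ^ 14 + 189017616792413 * a ^ 13 + 109597838345773 * a ^ 12 + 60295526247198 * a ^ 11 + 31215799815214 * a ^ 10 + 15068386389440 * a ^ 9 + 6712396313756 * a ^ 8 + 2726860246152 * a ^ 7 + 996048307495 * a ^ 6 + 321353092792 * a ^ 5 + 89392524398 * a ^ 4 + 20699588578 * a ^ 3 + 3769058731 * a ^ 2 + 483729525 * a + 32981570) * h11
  have c10 : a ^ 11 ^ 10 = a := by
    rw [show (11:ℕ) ^ 10 = 11 ^ 9 * 11 by norm_num, pow_mul, c9]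
    linear_combination (a ^ 89 + 3 * a ^ 88 + 3 * a ^ 87 - 3 * a ^ 86 - a ^ 85 + 3 * a ^ 84 + 5 * a ^ 83 + 3 * a ^ 82 - a ^ 81 + 5 * a ^ 80 + 3 * a ^ 78 - 5 * a ^ 77 - a ^ 76 + 2 * a ^ 75 + 5 * a ^ 74 - 4 * a ^ 73 + a ^ 72 - 3 * a ^ 71 - 4 * a ^ 70 + 5 * a ^ 68 + a ^ 67 - a ^ 66 + a ^ 65 - 2 * a ^ 64 + 5 * a ^ 63 + 2 * a ^ 62 - 4 * a ^ 61 - a ^ 60 + 2 * a ^ 59 + a ^ 58 + 2 * a ^ 57 - 4 * a ^ 56 + 2 * a ^ 55 - 5 * a ^ 54 - 2 * a ^ 53 - 5 * a ^ 52 - 2 * a ^ 51 - 4 * a ^ 50 - 2 * a ^ 49 + 4 * a ^ 47 - 5 * a ^ 46 + 4 * a ^ 45 + 5 * a ^ 44 - 3 * a ^ 42 - 3 * a ^ 41 + 2 * a ^ 40 - 2 * a ^ 39 + 4 * a ^ 37 - 2 * a ^ 36 - 3 * a ^ 35 + 5 * a ^ 34 + a ^ 33 - 5 * a ^ 32 +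 2 * a ^ 31 + 3 * a ^ 30 - 4 * a ^ 29 + 5 * a ^ 28 + 5 * a ^ 27 + 2 * a ^ 25 + a ^ 24 + 3 * a ^ 23 - 5 * a ^ 22 - 3 * a ^ 21 + 5 * a ^ 20 - 3 * a ^ 19 + 5 * a ^ 17 - 2 * a ^ 16 - 3 * a ^ 15 + 4 * a ^ 14 - 5 * a ^ 13 - 2 * a ^ 12 + 3 * a ^ 11 + 2 * a ^ 10 + 4 * a ^ 8 + 5 * a ^ 7 - 5 * a ^ 4 - 4 * a ^ 3 + 3 * a ^ 2 + 4 * a + 5) * ha + (-a ^ 98 - 8 * a ^ 97 - 9 * a ^ 96 + 126 * a ^ 95 + 978 * a ^ 94 + 4271 * a ^ 93 + 14367 * a ^ 92 + 41109 * a ^ 91 + 107479 * a ^ 90 + 265269 * a ^ 89 + 628814 * a ^ 88 + 1441145 * a ^ 87 + 3203489 * a ^ 86 + 6938435 * a ^ 85 + 14699834 * a ^ 84 + 30468029 * a ^ 83 + 61846101 * a ^ 82 + 123115843 * a ^ 81 + 240492716 * a ^ 80 + 461940963 * a ^ 79 + 873117554 * a ^ 78 + 1624336882 * a ^ 77 +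 2977672465 * a ^ 76 + 5378311976 * a ^ 75 + 9578499531 * a ^ 74 + 16833010792 * a ^ 73 + 29189998361 * a ^ 72 + 49985342003 * a ^ 71 + 84536190105 * a ^ 70 + 141219495671 * a ^ 69 + 233148296135 * a ^ 68 + 380410521337 * a ^ 67 + 613623785064 * a ^ 66 + 978792001770 * a ^ 65 + 1543899858913 * a ^ 64 + 2408839598256 * a ^ 63 + 3717830422329 * a ^ 62 + 5676657861070 * a ^ 61 + 8576420620853 * a ^ 60 + 12821294381649 * a ^ 59 + 18967486468265 * a ^ 58 + 27770094672140 * a ^ 57 + 40236950505758 * a ^ 56 + 57700941674448 * a ^ 55 + 81895023613641 * a ^ 54 + 115037262298591 * a ^ 53 + 159933565900591 * a ^ 52 + 220060493637878 * a ^ 51 + 299659482838255 * a ^ 50 + 403818673643465 * a ^ 49 + 538494603999896 * a ^ 48 + 710534434562682 * a ^ 47 + 927609815816252 * a ^ 46 + 1198039700545767 * a ^ 45 + 1530587460329755 * a ^ 44 + 1934054704209737 * a ^ 43 + 2416762201058386 * a ^ 42 + 2985982577311591 * a ^ 41 + 3647097570655585 * a ^ 40 + 4402758909705236 * a ^ 39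 + 5252031048779404 * a ^ 38 + 6189334534700580 * a ^ 37 + 7203709523167444 * a ^ 36 + 8278200179493487 * a ^ 35 + 9389363058420192 * a ^ 34 + 10507531267471281 * a ^ 33 + 11597344459111903 * a ^ 32 + 12618759444381954 * a ^ 31 + 13529042748473651 * a ^ 30 + 14284910562261279 * a ^ 29 + 14845239659286556 * a ^ 28 + 15174430375167986 * a ^ 27 + 15245285809268618 * a ^ 26 + 15041908130990184 * a ^ 25 + 14562176727702961 * a ^ 24 + 13818697010268556 * a ^ 23 + 12839002111967840 * a ^ 22 + 11664476473566425 * a ^ 21 + 10347487325241015 * a ^ 20 + 8947908355852157 * a ^ 19 + 7528672228039123 * a ^ 18 + 6150486176668765 * a ^ 17 + 4867114313612149 * a ^ 16 + 3721108072586763 * a ^ 15 + 2740556869465618 * a ^ 14 + 1938010739352893 * a ^ 13 + 1311146166497793 * a ^ 12 + 845113208926369 * a ^ 11 + 516500473234656 * a ^ 10 + 297655678305390 * a ^ 9 + 160652958516743 * a ^ 8 + 80524254300848 * a ^ 7 + 37090422198744 * a ^ 6 + 15473157997200 * a ^ 5 + 5724799997000 * a ^ 4 + 1823499998048 * a ^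 3 + 474999999104 * a ^ 2 + 89999999741 * a + 9090909040) * h11
  refine ⟨c10, ?_, ?_⟩
  · rw [c5]
    exact IsUnit.of_mul_eq_one (4 * a ^ 9 + 6 * a ^ 8 + 5 * a ^ 7 + 4 * a ^ 6 + 6 * a ^ 4 + 6 * a ^ 2 + 3 * a + 4)
      (by linear_combination (-a ^ 8 - 3 * a ^ 7 - 3 * a ^ 6 + 4 * a ^ 3 - 5 * a ^ 2 + 2 * a + 1) * ha + (3 * a ^ 18 + 11 * a ^ 17 + 40 * a ^ 16 + 147 * a ^ 15 + 435 * a ^ 14 + 986 * a ^ 13 + 1680 * a ^ 12 + 2092 * a ^ 11 + 1829 * a ^ 10 + 880 * a ^ 9 + 162 * a ^ 8 - 261 * a ^ 7 + 39 * a ^ 6 - 218 * a ^ 5 - 353 * a ^ 4 - 356 * a ^ 3 - 167 * a ^ 2 - 59 * a - 7) * h11)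
  · rw [c2]
    exact IsUnit.of_mul_eq_one (3 * a ^ 9 + 8 * a ^ 8 + 4 * a ^ 7 + 7 * a ^ 6 + a ^ 5 + 7 * a ^ 3 + 9 * a ^ 2 + a + 8)
      (by linear_combination (-a ^ 8 + 3 * a ^ 7 - 2 * a ^ 6 + 4 * a ^ 5 - a ^ 4 - 4 * a ^ 2 - 4 * a + 3) * ha + (2 * a ^ 18 + 10 * a ^ 17 + 22 * a ^ 16 + 26 * a ^ 15 + 16 * a ^ 14 - 158 * a ^ 13 - 358 * a ^ 12 - 812 * a ^ 11 - 760 * a ^ 10 - 624 * a ^ 9 + 361 * a ^ 8 + 1355 * a ^ 7 + 2016 * a ^ 6 + 1653 * a ^ 5 + 565 * a ^ 4 - 47 * a ^ 3 - 190 * a ^ 2 - 89 * a - 27) * h11)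

lemma fF_irred : Irreducible fF :=
  rabin fF fF_monic fF_deg certs.1 certs.2.1 certs.2.2

end F1IrredAux

/-- The polynomial `f₁` is irreducible over `ℚ`. -/
theorem F1_irreducible :
    Irreducible (X ^ 10 + 30 * X ^ 9 + 215 * X ^ 8 + 720 * X ^ 7 + 1840 * X ^ 6 +
      3024 * X ^ 5 + 3880 * X ^ 4 + 2880 * X ^ 3 + 1520 * X ^ 2 + 480 * X + 112 :
      Polynomial ℚ) := by
  classical
  have hmonic : (X ^ 10 + 30 * X ^ 9 + 215 * X ^ 8 + 720 * X ^ 7 + 1840 * X ^ 6 +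
      3024 * X ^ 5 + 3880 * X ^ 4 + 2880 * X ^ 3 + 1520 * X ^ 2 + 480 * X + 112 : ℤ[X]).Monic := by
    monicity!
  have hzirr : Irreducible (X ^ 10 + 30 * X ^ 9 + 215 * X ^ 8 + 720 * X ^ 7 + 1840 * X ^ 6 +
      3024 * X ^ 5 + 3880 * X ^ 4 + 2880 * X ^ 3 + 1520 * X ^ 2 + 480 * X + 112 : ℤ[X]) := by
    apply hmonic.irreducible_of_irreducible_map (Int.castRingHom F1IrredAux.F)
    have heq : (X ^ 10 + 30 * X ^ 9 + 215 * X ^ 8 + 720 * X ^ 7 + 1840 * X ^ 6 +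
        3024 * X ^ 5 + 3880 * X ^ 4 + 2880 * X ^ 3 + 1520 * X ^ 2 + 480 * X + 112 :
        ℤ[X]).map (Int.castRingHom F1IrredAux.F) = F1IrredAux.fF := by
      unfold F1IrredAux.fF
      simp only [Polynomial.map_add, Polynomial.map_mul, Polynomial.map_pow, Polynomial.map_X,
        Polynomial.map_ofNat]
    rw [heq]
    exact F1IrredAux.fF_irred
  have hq := (Polynomial.IsPrimitive.Int.irreducible_iff_irreducible_map_cast
    hmonic.isPrimitive).mp hzirr
  have heq2 : (X ^ 10 + 30 * X ^ 9 + 215 * X ^ 8 + 720 * X ^ 7 + 1840 * X ^ 6 +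
      3024 * X ^ 5 + 3880 * X ^ 4 + 2880 * X ^ 3 + 1520 * X ^ 2 + 480 * X + 112 :
      ℤ[X]).map (Int.castRingHom ℚ) = (X ^ 10 + 30 * X ^ 9 + 215 * X ^ 8 + 720 * X ^ 7 +
      1840 * X ^ 6 + 3024 * X ^ 5 + 3880 * X ^ 4 + 2880 * X ^ 3 + 1520 * X ^ 2 + 480 * X + 112 :
      Polynomial ℚ) := by
    simp only [Polynomial.map_add, Polynomial.map_mul, Polynomial.map_pow, Polynomial.map_X,
      Polynomial.map_ofNat]
  rwa [heq2] at hq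
end

section
/- If b and c are odd coprime integers and j ∈ {-2,...,2}, u,v ∈ Z satisfy b + c√2 = (1+√2)^j (u+v√2)^5, then u is odd, v ≡ j+1 (mod 2), and gcd(u,v) = 1. -/
lemma aux_parity (u v b c x y : ℤ) (hb : Odd b) (hc : Odd c) (hcop : Int.gcd b c = 1)
    (hx : Odd x)
    (hb' : b = x*(u^5+20*u^3*v^2+20*u*v^4) + 2*y*(5*u^4*v+20*u^2*v^3+4*v^5))
    (hc' : c = y*(u^5+20*u^3*v^2+20*u*v^4) + x*(5*u^4*v+20*u^2*v^3+4*v^5)) :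
    Odd u ∧ Int.ModEq 2 v (y+1) ∧ Int.gcd u v = 1 := by
  have key : ∀ B C X Y U V : ZMod 2, B = 1 → C = 1 → X = 1 →
      B = X*(U^5+20*U^3*V^2+20*U*V^4) + 2*Y*(5*U^4*V+20*U^2*V^3+4*V^5) →
      C = Y*(U^5+20*U^3*V^2+20*U*V^4) + X*(5*U^4*V+20*U^2*V^3+4*V^5) →
      U = 1 ∧ V = Y + 1 := by decide
  have Hb := congrArg (Int.cast : ℤ → ZMod 2) hb'
  have Hc := congrArg (Int.cast : ℤ → ZMod 2) hc'
  push_cast at Hb Hc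
  have cast1 : ∀ n : ℤ, Odd n → ((n : ZMod 2)) = 1 := by
    intro n hn
    obtain ⟨k, rfl⟩ := hn
    push_cast
    have h2 : (2 : ZMod 2) = 0 := rfl
    rw [h2]; ring
  obtain ⟨hU, hV⟩ := key _ _ _ _ _ _ (cast1 b hb) (cast1 c hc) (cast1 x hx) Hb Hc
  refine ⟨?_, ?_, ?_⟩
  · rw [Int.odd_iff]
    have : u ≡ 1 [ZMOD 2] := (ZMod.intCast_eq_intCast_iff _ _ _).mp (by push_cast; exact hU)
    rw [Int.ModEq] at this; omega
  · exact (ZMod.intCast_eq_intCast_iff _ _ _).mp (by push_cast; exact hV)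
  · have du : ((Int.gcd u v : ℤ)) ∣ u := Int.gcd_dvd_left u v
    have dv : ((Int.gcd u v : ℤ)) ∣ v := Int.gcd_dvd_right u v
    have dvb : ((Int.gcd u v : ℤ)) ∣ b := by
      rw [hb']
      exact dvd_add ((du.trans ⟨u^4+20*u^2*v^2+20*v^4, by ring⟩).mul_left x)
        ((dv.trans ⟨5*u^4+20*u^2*v^2+4*v^4, by ring⟩).mul_left (2*y))
    have dvc : ((Int.gcd u v : ℤ)) ∣ c := by
      rw [hc']
      exact dvd_add ((du.trans ⟨u^4+20*u^2*v^2+20*v^4, by ring⟩).mul_left y)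
        ((dv.trans ⟨5*u^4+20*u^2*v^2+4*v^4, by ring⟩).mul_left x)
    have : ((Int.gcd u v : ℤ)) ∣ (Int.gcd b c : ℤ) := Int.dvd_coe_gcd dvb dvc
    rw [hcop] at this
    exact Nat.dvd_one.mp (by exact_mod_cast this)

/-- If `b` and `c` are odd coprime integers and
`b + c√2 = (1+√2)^j (u+v√2)⁵` with `-2 ≤ j ≤ 2`, then `u` is odd,
`v ≡ j + 1 (mod 2)`, and `gcd(u,v) = 1`. -/
theorem parity_and_coprimality_of_uv (b c : ℤ) (hb : Odd b) (hc : Odd c)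
    (hcop : Int.gcd b c = 1) (j u v : ℤ) (hj1 : -2 ≤ j) (hj2 : j ≤ 2)
    (h : (⟨b, c⟩ : Zsqrtd 2) =
      (↑(sqrt2Unit ^ j) : Zsqrtd 2) * (⟨u, v⟩ : Zsqrtd 2) ^ 5) :
    Odd u ∧ Int.ModEq 2 v (j + 1) ∧ Int.gcd u v = 1 := by
  interval_cases j
  · have e : (↑(sqrt2Unit ^ (-2:ℤ)) : Zsqrtd 2) = ⟨3,-2⟩ := rfl
    rw [e, Zsqrtd.ext_iff] at h
    obtain ⟨h1, h2⟩ := h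
    simp only [Zsqrtd.re_mul, Zsqrtd.im_mul, pow_succ, pow_zero,
      Zsqrtd.re_one, Zsqrtd.im_one] at h1 h2
    obtain ⟨r1, r2, r3⟩ := aux_parity u v b c 3 (-2) hb hc hcop (by decide)
      (by linear_combination h1) (by linear_combination h2)
    exact ⟨r1, by rw [Int.ModEq] at r2 ⊢; omega, r3⟩
  · have e : (↑(sqrt2Unit ^ (-1:ℤ)) : Zsqrtd 2) = ⟨-1,1⟩ := rfl
    rw [e, Zsqrtd.ext_iff] at h
    obtain ⟨h1, h2⟩ := h
    simp only [Zsqrtd.re_mul, Zsqrtd.im_mul, pow_succ, pow_zero,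
      Zsqrtd.re_one, Zsqrtd.im_one] at h1 h2
    obtain ⟨r1, r2, r3⟩ := aux_parity u v b c (-1) 1 hb hc hcop (by decide)
      (by linear_combination h1) (by linear_combination h2)
    exact ⟨r1, by rw [Int.ModEq] at r2 ⊢; omega, r3⟩
  · have e : (↑(sqrt2Unit ^ (0:ℤ)) : Zsqrtd 2) = ⟨1,0⟩ := rfl
    rw [e, Zsqrtd.ext_iff] at h
    obtain ⟨h1, h2⟩ := h
    simp only [Zsqrtd.re_mul, Zsqrtd.im_mul, pow_succ, pow_zero,
      Zsqrtd.re_one, Zsqrtd.im_one] at h1 h2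
    obtain ⟨r1, r2, r3⟩ := aux_parity u v b c 1 0 hb hc hcop (by decide)
      (by linear_combination h1) (by linear_combination h2)
    exact ⟨r1, by rw [Int.ModEq] at r2 ⊢; omega, r3⟩
  · have e : (↑(sqrt2Unit ^ (1:ℤ)) : Zsqrtd 2) = ⟨1,1⟩ := rfl
    rw [e, Zsqrtd.ext_iff] at h
    obtain ⟨h1, h2⟩ := h
    simp only [Zsqrtd.re_mul, Zsqrtd.im_mul, pow_succ, pow_zero,
      Zsqrtd.re_one, Zsqrtd.im_one] at h1 h2
    obtain ⟨r1, r2, r3⟩ := aux_parity u v b c 1 1 hb hc hcop (by decide)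
      (by linear_combination h1) (by linear_combination h2)
    exact ⟨r1, by rw [Int.ModEq] at r2 ⊢; omega, r3⟩
  · have e : (↑(sqrt2Unit ^ (2:ℤ)) : Zsqrtd 2) = ⟨3,2⟩ := rfl
    rw [e, Zsqrtd.ext_iff] at h
    obtain ⟨h1, h2⟩ := h
    simp only [Zsqrtd.re_mul, Zsqrtd.im_mul, pow_succ, pow_zero,
      Zsqrtd.re_one, Zsqrtd.im_one] at h1 h2
    obtain ⟨r1, r2, r3⟩ := aux_parity u v b c 3 2 hb hc hcop (by decide)
      (by linear_combination h1) (by linear_combination h2)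
    exact ⟨r1, by rw [Int.ModEq] at r2 ⊢; omega, r3⟩
end

section
/- If a, b, c, d are coprime integers such that (a^2, b^2, c^2, d^5) is an arithmetic progression, then there exist j ∈ {0, ±1, ±2} and integers u, v with v ≠ 0 or (u,v) = (±1, 0), such that a^2 = 2 g_j(u,v)^2 - h_j(u,v)^2, where g_j + h_j √2 = (1+√2)^j (u + v√2)^5 in Z[√2]; in particular, if v ≠ 0 then (u/v, a/v^5) is a rational point on the curve y^2 = 2 g_j(x,1)^2 - h_j(x,1)^2. -/
open Zsqrtd

local notation "ℤ√2" => Zsqrtd (2:ℤ)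

/-- `g_j(u,v)`, the rational part of `(1+√2)^j (u + v√2)⁵` in `ℤ[√2]`. -/
def gPart (j u v : ℤ) : ℤ :=
  ((↑(sqrt2Unit ^ j) : Zsqrtd 2) * (⟨u, v⟩ : Zsqrtd 2) ^ 5).re

/-- `h_j(u,v)`, the `√2`-part of `(1+√2)^j (u + v√2)⁵` in `ℤ[√2]`. -/
def hPart (j u v : ℤ) : ℤ :=
  ((↑(sqrt2Unit ^ j) : Zsqrtd 2) * (⟨u, v⟩ : Zsqrtd 2) ^ 5).im

namespace Z2


theorem two_nonsquare : ∀ n : ℤ, (2:ℤ) ≠ n * n := by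
  intro n h
  rcases le_or_gt n (-2) with h1 | h1
  · nlinarith
  rcases le_or_gt 2 n with h2 | h2
  · nlinarith
  interval_cases n <;> omega

theorem norm_ne_zero {x : ℤ√2} (hx : x ≠ 0) : x.norm ≠ 0 := by
  intro h
  exact hx ((Zsqrtd.norm_eq_zero two_nonsquare x).mp h)

instance : Div ℤ√2 :=
  ⟨fun x y =>
    ⟨round ((((x * star y).re : ℤ) : ℚ) / ((Zsqrtd.norm y : ℤ) : ℚ)),
     round ((((x * star y).im : ℤ) : ℚ) / ((Zsqrtd.norm y : ℤ) : ℚ))⟩⟩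

instance : Mod ℤ√2 := ⟨fun x y => x - y * (x / y)⟩

theorem div_def (x y : ℤ√2) : x / y =
    ⟨round ((((x * star y).re : ℤ) : ℚ) / ((Zsqrtd.norm y : ℤ) : ℚ)),
     round ((((x * star y).im : ℤ) : ℚ) / ((Zsqrtd.norm y : ℤ) : ℚ))⟩ := rfl

theorem mod_def (x y : ℤ√2) : x % y = x - y * (x / y) := rfl

theorem norm_mod_lt (x : ℤ√2) {y : ℤ√2} (hy : y ≠ 0) :
    (x % y).norm.natAbs < y.norm.natAbs := by
  have hn : y.norm ≠ 0 := norm_ne_zero hy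
  set n := y.norm with hn'
  set z := x * star y with hz
  set q : ℤ√2 := x / y with hq
  have hys : y * star y = (n : ℤ√2) := (Zsqrtd.norm_eq_mul_conj y).symm
  have key : star y * (x % y) = z - (n : ℤ√2) * q := by
    rw [mod_def]
    have : star y * (x - y * q) = x * star y - (y * star y) * q := by ring
    rw [this, hys, hz]
  have hqre : q.re = round (((z.re : ℤ) : ℚ) / ((n : ℤ) : ℚ)) := rfl
  have hqim : q.im = round (((z.im : ℤ) : ℚ) / ((n : ℤ) : ℚ)) := rfl
  set e1 : ℤ := z.re - n * q.re with he1
  set e2 : ℤ := z.im - n * q.im with he2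
  have hnorm : n * (x % y).norm = e1 ^ 2 - 2 * e2 ^ 2 := by
    have h := congrArg Zsqrtd.norm key
    rw [Zsqrtd.norm_mul, Zsqrtd.norm_conj] at h
    rw [← hn'] at h
    rw [h]
    simp only [Zsqrtd.norm_def, Zsqrtd.re_sub, Zsqrtd.im_sub, Zsqrtd.re_mul, Zsqrtd.im_mul,
      Zsqrtd.re_intCast, Zsqrtd.im_intCast, he1, he2]
    ring
  have hnq : ((n : ℚ)) ≠ 0 := Int.cast_ne_zero.mpr hn
  have habs1 : |(e1 : ℚ)| ≤ |(n : ℚ)| / 2 := by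
    have h := abs_sub_round (((z.re : ℤ) : ℚ) / ((n : ℤ) : ℚ))
    have he : (e1 : ℚ) = (n : ℚ) * (((z.re : ℤ) : ℚ) / ((n : ℤ) : ℚ) - (q.re : ℚ)) := by
      push_cast [he1]; field_simp
    rw [he, abs_mul, hqre]
    push_cast
    calc |(n:ℚ)| * |((z.re : ℤ) : ℚ) / ((n : ℤ) : ℚ) - (round (((z.re : ℤ) : ℚ) / ((n : ℤ) : ℚ)) : ℚ)|
        ≤ |(n:ℚ)| * (1/2) := by
          apply mul_le_mul_of_nonneg_left _ (abs_nonneg _)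
          simpa using h
      _ = |(n:ℚ)| / 2 := by ring
  have habs2 : |(e2 : ℚ)| ≤ |(n : ℚ)| / 2 := by
    have h := abs_sub_round (((z.im : ℤ) : ℚ) / ((n : ℤ) : ℚ))
    have he : (e2 : ℚ) = (n : ℚ) * (((z.im : ℤ) : ℚ) / ((n : ℤ) : ℚ) - (q.im : ℚ)) := by
      push_cast [he2]; field_simp
    rw [he, abs_mul, hqim]
    push_cast
    calc |(n:ℚ)| * |((z.im : ℤ) : ℚ) / ((n : ℤ) : ℚ) - (round (((z.im : ℤ) : ℚ) / ((n : ℤ) : ℚ)) : ℚ)|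
        ≤ |(n:ℚ)| * (1/2) := by
          apply mul_le_mul_of_nonneg_left _ (abs_nonneg _)
          simpa using h
      _ = |(n:ℚ)| / 2 := by ring
  have hone : (1 : ℚ) ≤ |(n : ℚ)| := by
    rw [← Int.cast_abs]
    exact_mod_cast Int.one_le_abs hn
  have hmain : |(n : ℚ)| * |((x % y).norm : ℚ)| < |(n : ℚ)| * |(n : ℚ)| := by
    rw [← abs_mul]
    have hcast : ((n : ℚ)) * (((x % y).norm : ℚ)) = (e1 : ℚ) ^ 2 - 2 * (e2 : ℚ) ^ 2 := by
      exact_mod_cast congrArg (fun t : ℤ => (t : ℚ)) hnorm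
    rw [hcast, abs_lt]
    constructor
    · nlinarith [sq_abs (e1:ℚ), sq_abs (e2:ℚ), sq_nonneg (e1:ℚ), sq_nonneg (e2:ℚ),
        abs_nonneg (e1:ℚ), abs_nonneg (e2:ℚ)]
    · nlinarith [sq_abs (e1:ℚ), sq_abs (e2:ℚ), sq_nonneg (e1:ℚ), sq_nonneg (e2:ℚ),
        abs_nonneg (e1:ℚ), abs_nonneg (e2:ℚ)]
  have hlt : |((x % y).norm : ℚ)| < |(n : ℚ)| :=
    lt_of_mul_lt_mul_left hmain (abs_nonneg _)
  have hint : |(x % y).norm| < |n| := by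
    rw [← Int.cast_abs, ← Int.cast_abs] at hlt
    exact_mod_cast hlt
  rw [Int.abs_eq_natAbs, Int.abs_eq_natAbs] at hint
  exact_mod_cast hint

instance instNontrivial : Nontrivial ℤ√2 := ⟨⟨0, 1, by decide⟩⟩

instance : EuclideanDomain ℤ√2 :=
  { Zsqrtd.commRing, instNontrivial with
    quotient := (· / ·)
    remainder := (· % ·)
    quotient_zero := fun x => by
      ext <;> simp [div_def]
    quotient_mul_add_remainder_eq := fun x y => by
      change y * (x / y) + (x - y * (x / y)) = x; ring
    r := _
    r_wellFounded := (measure (Int.natAbs ∘ Zsqrtd.norm)).wf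
    remainder_lt := fun x y hy => norm_mod_lt x hy
    mul_left_not_lt := fun a b hb0 => by
      change ¬(Zsqrtd.norm (a * b)).natAbs < (Zsqrtd.norm a).natAbs
      apply not_lt_of_ge
      rw [Zsqrtd.norm_mul, Int.natAbs_mul]
      exact Nat.le_mul_of_pos_right _ (Nat.pos_of_ne_zero fun h =>
        (norm_ne_zero hb0) (Int.natAbs_eq_zero.mp h)) }



def w0 : ℤ√2 := ⟨1, 1⟩

theorem norm_unit {z : ℤ√2} (h : IsUnit z) : z.norm = 1 ∨ z.norm = -1 := by
  have := Zsqrtd.norm_eq_one_iff.mpr h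
  omega

theorem unit_nonneg_pow : ∀ (N : ℕ) (z : ℤ√2), IsUnit z → z.im.natAbs = N →
    1 ≤ z.re → 0 ≤ z.im → ∃ n : ℕ, z = w0 ^ n := by
  intro N
  induction N using Nat.strong_induction_on with
  | _ N ih =>
    intro z hz hN hre him
    have hnorm := norm_unit hz
    rw [Zsqrtd.norm_def] at hnorm
    rcases eq_or_lt_of_le him with him0 | him1
    · -- z.im = 0
      have him0' : z.im = 0 := him0.symm
      rw [him0'] at hnorm
      have hre1 : z.re = 1 := by
        rcases hnorm with hh | hh
        · nlinarith
        · nlinarith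
      refine ⟨0, ?_⟩
      ext <;> simp [w0, hre1, him0']
    · -- 1 ≤ z.im
      have him1 : 1 ≤ z.im := him1
      have hx2 : z.re < 2 * z.im := by
        rcases hnorm with hh | hh
        · nlinarith [sq_nonneg (z.re - 2 * z.im), sq_nonneg (z.re - 2 * z.im + 1)]
        · nlinarith [sq_nonneg (z.re - 2 * z.im), sq_nonneg (z.re - 2 * z.im + 1)]
      have hxy : z.im ≤ z.re := by
        rcases hnorm with hh | hh
        · nlinarith [sq_nonneg (z.im - z.re), sq_nonneg (z.im - z.re - 1)]
        · nlinarith [sq_nonneg (z.im - z.re), sq_nonneg (z.im - z.re - 1)]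
      set z' : ℤ√2 := z * ⟨-1, 1⟩ with hz'
      have hre' : z'.re = 2 * z.im - z.re := by
        simp [hz', Zsqrtd.re_mul]; ring
      have him' : z'.im = z.re - z.im := by
        simp [hz', Zsqrtd.im_mul]; ring
      have hu' : IsUnit z' := by
        apply hz.mul
        rw [← Zsqrtd.norm_eq_one_iff]
        decide
      have hdec : z'.im.natAbs < N := by
        rw [him']
        omega
      obtain ⟨n, hn⟩ := ih _ hdec z' hu' rfl (by omega) (by omega)
      refine ⟨n + 1, ?_⟩
      have hkey : z' * w0 = z := by
        rw [hz']
        have : (⟨-1, 1⟩ * w0 : ℤ√2) = 1 := by decide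
        rw [mul_assoc, this, mul_one]
      rw [pow_succ, ← hn, hkey]

theorem val_pow_nat (n : ℕ) : (↑(sqrt2Unit ^ (n : ℤ)) : ℤ√2) = w0 ^ n := by
  rw [zpow_natCast, Units.val_pow_eq_pow_val]; rfl

theorem val_pow_neg_nat (n : ℕ) : (↑(sqrt2Unit ^ (-(n : ℤ))) : ℤ√2) = (⟨-1, 1⟩ : ℤ√2) ^ n := by
  rw [zpow_neg, zpow_natCast, ← inv_pow, Units.val_pow_eq_pow_val]; rfl

theorem unit_form_posRe (z : ℤ√2) (hz : IsUnit z) (hre : 1 ≤ z.re) :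
    ∃ n : ℤ, z = ↑(sqrt2Unit ^ n) ∨ z = -↑(sqrt2Unit ^ n) := by
  rcases le_or_gt 0 z.im with him | him
  · obtain ⟨n, hn⟩ := unit_nonneg_pow z.im.natAbs z hz rfl hre him
    exact ⟨(n : ℤ), Or.inl (by rw [val_pow_nat, hn])⟩
  · have hstar : IsUnit (star z) := hz.star
    have hre' : 1 ≤ (star z).re := by rwa [Zsqrtd.re_star]
    have him' : 0 ≤ (star z).im := by rw [Zsqrtd.im_star]; omega
    obtain ⟨n, hn⟩ := unit_nonneg_pow (star z).im.natAbs (star z) hstar rfl hre' him'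
    have hzval : z = (star w0) ^ n := by
      have := congrArg star hn
      rwa [star_star, star_pow] at this
    have hsw : (star w0 : ℤ√2) = -(⟨-1, 1⟩ : ℤ√2) := by decide
    rw [hsw] at hzval
    rcases Nat.even_or_odd n with he | ho
    · exact ⟨-(n : ℤ), Or.inl (by rw [val_pow_neg_nat, hzval, he.neg_pow])⟩
    · exact ⟨-(n : ℤ), Or.inr (by rw [val_pow_neg_nat, hzval, ho.neg_pow])⟩

theorem unit_form (z : ℤ√2) (hz : IsUnit z) :
    ∃ n : ℤ, z = ↑(sqrt2Unit ^ n) ∨ z = -↑(sqrt2Unit ^ n) := by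
  have hre : z.re ≠ 0 := by
    intro h0
    have hnorm := norm_unit hz
    rw [Zsqrtd.norm_def, h0] at hnorm
    obtain ⟨t, ht⟩ : ∃ t : ℤ, 2 * t = 1 ∨ 2 * t = -1 := by
      refine ⟨-(z.im * z.im), ?_⟩
      rcases hnorm with hh | hh
      · left; linarith
      · right; linarith
    omega
  rcases lt_or_gt_of_ne hre with hneg | hpos
  · obtain ⟨n, hn⟩ := unit_form_posRe (-z) hz.neg (by simp; omega)
    refine ⟨n, ?_⟩
    rcases hn with hn | hn
    · right; rw [← hn]; ring
    · left; rw [← neg_neg z, hn]; ring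
  · exact unit_form_posRe z hz hpos

end Z2

/-- If `(a², b², c², d⁵)` is an arithmetic progression in coprime integers,
then `a² = 2 g_j(u,v)² - h_j(u,v)²` for some `j ∈ {0, ±1, ±2}` and integers
`u, v` with `v ≠ 0` or `(u,v) = (±1, 0)`; in particular, if `v ≠ 0` then
`(u/v, a/v⁵)` is a rational point on `y² = f_j(x)`, where by homogeneity
`f_j(u/v) = (2 g_j(u,v)² - h_j(u,v)²)/v¹⁰`. -/
theorem progression_gives_point_on_curve (a b c d : ℤ)
    (hcop : Int.gcd a b = 1)
    (h1 : 2 * b ^ 2 = a ^ 2 + c ^ 2) (h2 : 2 * c ^ 2 = b ^ 2 + d ^ 5) :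
    ∃ j : ℤ, -2 ≤ j ∧ j ≤ 2 ∧ ∃ u v : ℤ,
      (v ≠ 0 ∨ ((u = 1 ∨ u = -1) ∧ v = 0)) ∧
      a ^ 2 = 2 * gPart j u v ^ 2 - hPart j u v ^ 2 ∧
      (v ≠ 0 → ((a : ℚ) / (v : ℚ) ^ 5) ^ 2 =
        (2 * (gPart j u v : ℚ) ^ 2 - (hPart j u v : ℚ) ^ 2) / (v : ℚ) ^ 10) := by
  have hsq8 : ∀ x : ℤ, Odd x → ∃ m, x ^ 2 = 8 * m + 1 := by
    rintro x ⟨k, hk⟩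
    rcases Int.even_or_odd k with ⟨i, hi⟩ | ⟨i, hi⟩
    · exact ⟨2 * i ^ 2 + i, by subst hk; subst hi; ring⟩
    · exact ⟨2 * i ^ 2 + 3 * i + 1, by subst hk; subst hi; ring⟩
  -- b is odd
  have hbodd : Odd b := by
    by_contra hb
    rw [Int.not_odd_iff_even] at hb
    have haodd : Odd a := by
      by_contra ha
      rw [Int.not_odd_iff_even] at ha
      have h2g := Int.dvd_gcd ha.two_dvd hb.two_dvd
      rw [hcop] at h2g
      norm_num at h2g
    obtain ⟨A, hA⟩ := hsq8 a haodd
    obtain ⟨k, hk⟩ := hb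
    have hb2 : b ^ 2 = 4 * k ^ 2 := by subst hk; ring
    rcases Int.even_or_odd c with ⟨m, hm⟩ | hcodd
    · have hc2 : c ^ 2 = 4 * m ^ 2 := by subst hm; ring
      rw [hb2, hA, hc2] at h1
      obtain ⟨K, hK⟩ : ∃ K, k ^ 2 = K := ⟨_, rfl⟩
      obtain ⟨M, hM⟩ : ∃ M, m ^ 2 = M := ⟨_, rfl⟩
      rw [hK, hM] at h1
      omega
    · obtain ⟨C, hC⟩ := hsq8 c hcodd
      rw [hb2, hA, hC] at h1
      obtain ⟨K, hK⟩ : ∃ K, k ^ 2 = K := ⟨_, rfl⟩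
      rw [hK] at h1
      omega
  -- b and c are coprime
  have hbc : Int.gcd b c = 1 := by
    by_contra hg
    obtain ⟨p, hp, hpdvd⟩ := Nat.exists_prime_and_dvd hg
    have hpb : (p : ℤ) ∣ b :=
      dvd_trans (Int.natCast_dvd_natCast.mpr hpdvd) (Int.gcd_dvd_left b c)
    have hpc : (p : ℤ) ∣ c :=
      dvd_trans (Int.natCast_dvd_natCast.mpr hpdvd) (Int.gcd_dvd_right b c)
    have hpa2 : (p : ℤ) ∣ a ^ 2 := by
      have hrw : a ^ 2 = 2 * b ^ 2 - c ^ 2 := by linarith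
      rw [hrw]
      exact dvd_sub ((dvd_pow hpb two_ne_zero).mul_left 2) (dvd_pow hpc two_ne_zero)
    have hpa : (p : ℤ) ∣ a := Int.Prime.dvd_pow' hp hpa2
    have := Int.dvd_gcd hpa hpb
    rw [hcop] at this
    have h1' : p ∣ 1 := by exact_mod_cast this
    exact hp.one_lt.ne' (Nat.dvd_one.mp h1')
  set X : ℤ√2 := ⟨b, c⟩ with hXdef
  have hXn2 : X.norm = b ^ 2 - 2 * c ^ 2 := by
    rw [Zsqrtd.norm_def]; ring
  have hXnorm : X.norm = (-d) ^ 5 := by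
    rw [hXn2]; linear_combination -h2
  have heq : X * star X = ((-d : ℤ) : ℤ√2) ^ 5 := by
    rw [← Zsqrtd.norm_eq_mul_conj, hXnorm]
    push_cast
    ring
  have hXodd : Odd X.norm := by
    rw [hXn2]
    exact (hbodd.pow).sub_even (even_two_mul _)
  -- coprimality of X and star X
  have hcopX : IsCoprime X (star X) := by
    rw [← EuclideanDomain.gcd_isUnit_iff]
    set g := EuclideanDomain.gcd X (star X) with hg
    have hd1 : g ∣ X := EuclideanDomain.gcd_dvd_left _ _
    have hd2 : g ∣ star X := EuclideanDomain.gcd_dvd_right _ _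
    have hnd : ∀ {x y : ℤ√2}, x ∣ y → x.norm ∣ y.norm := by
      rintro x y ⟨k, rfl⟩; exact ⟨k.norm, Zsqrtd.norm_mul x k⟩
    have hdvd1 : g.norm ∣ X.norm := hnd hd1
    have hsum : g ∣ ((2 * b : ℤ) : ℤ√2) := by
      have hrw : ((2 * b : ℤ) : ℤ√2) = X + star X := by
        ext <;> simp [hXdef] <;> ring
      rw [hrw]; exact dvd_add hd1 hd2
    have hdiff : g ∣ (⟨0, 2 * c⟩ : ℤ√2) := by
      have hrw : (⟨0, 2 * c⟩ : ℤ√2) = X - star X := by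
        ext <;> simp [hXdef] <;> ring
      rw [hrw]; exact dvd_sub hd1 hd2
    have h4b : g.norm ∣ 4 * b ^ 2 := by
      have h' := hnd hsum
      rw [Zsqrtd.norm_intCast, show (2 * b) * (2 * b) = 4 * b ^ 2 by ring] at h'
      exact h'
    have h8c : g.norm ∣ 8 * c ^ 2 := by
      have h' := hnd hdiff
      have hnm : (⟨0, 2 * c⟩ : ℤ√2).norm = -(8 * c ^ 2) := by
        show (0 : ℤ) * 0 - 2 * (2 * c) * (2 * c) = -(8 * c ^ 2); ring
      rw [hnm] at h'
      exact (dvd_neg).mp h'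
    set m := g.norm.natAbs with hm
    have hmodd : Odd m :=
      Odd.of_dvd_nat (Int.natAbs_odd.mpr hXodd) (Int.natAbs_dvd_natAbs.mpr hdvd1)
    have hco4 : Nat.Coprime m 4 := by
      have h' := (hmodd.coprime_two_right).pow_right 2
      norm_num at h'
      exact h'
    have hco8 : Nat.Coprime m 8 := by
      have h' := (hmodd.coprime_two_right).pow_right 3
      norm_num at h'
      exact h'
    have hmb : m ∣ b.natAbs ^ 2 := by
      have h' := Int.natAbs_dvd_natAbs.mpr h4b
      rw [Int.natAbs_mul, Int.natAbs_pow] at h'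
      exact hco4.dvd_of_dvd_mul_left (by exact_mod_cast h')
    have hmc : m ∣ c.natAbs ^ 2 := by
      have h' := Int.natAbs_dvd_natAbs.mpr h8c
      rw [Int.natAbs_mul, Int.natAbs_pow] at h'
      exact hco8.dvd_of_dvd_mul_left (by exact_mod_cast h')
    have hbcnat : Nat.Coprime b.natAbs c.natAbs := hbc
    have hm1 : m = 1 := by
      have hco : Nat.Coprime (b.natAbs ^ 2) (c.natAbs ^ 2) := Nat.Coprime.pow 2 2 hbcnat
      have hdg := Nat.dvd_gcd hmb hmc
      rw [Nat.Coprime.gcd_eq_one hco] at hdg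
      exact Nat.dvd_one.mp hdg
    exact Zsqrtd.norm_eq_one_iff.mp hm1
  -- factorization
  obtain ⟨w, hassoc⟩ := exists_associated_pow_of_mul_eq_pow' hcopX heq
  obtain ⟨u, hu⟩ := hassoc
  obtain ⟨n, hn⟩ := Z2.unit_form (↑u) u.isUnit
  obtain ⟨q, j, hj1, hj2, hqj⟩ : ∃ q j : ℤ, -2 ≤ j ∧ j ≤ 2 ∧ n = 5 * q + j :=
    ⟨(n + 2) / 5, n - 5 * ((n + 2) / 5), by omega, by omega, by ring⟩
  have hEpow : ((sqrt2Unit ^ q : (Zsqrtd 2)ˣ) : ℤ√2) ^ 5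
      = ((sqrt2Unit ^ (5 * q) : (Zsqrtd 2)ˣ) : ℤ√2) := by
    rw [← Units.val_pow_eq_pow_val]
    congr 1
    rw [← zpow_natCast (sqrt2Unit ^ q) 5, ← zpow_mul]
    norm_num [mul_comm]
  have hmulpow : (↑(sqrt2Unit ^ j) : ℤ√2) * ((↑(sqrt2Unit ^ q) : ℤ√2) * w) ^ 5
      = (↑(sqrt2Unit ^ n) : ℤ√2) * w ^ 5 := by
    rw [mul_pow, hEpow, ← mul_assoc, ← Units.val_mul, ← zpow_add]
    congr 3
    omega
  have hodd5 : Odd 5 := ⟨2, by norm_num⟩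
  obtain ⟨W, hW⟩ : ∃ W : ℤ√2, X = (↑(sqrt2Unit ^ j) : ℤ√2) * W ^ 5 := by
    rcases hn with hn | hn
    · refine ⟨(↑(sqrt2Unit ^ q) : ℤ√2) * w, ?_⟩
      rw [hmulpow, ← hn, mul_comm, hu]
    · refine ⟨-((↑(sqrt2Unit ^ q) : ℤ√2) * w), ?_⟩
      rw [hodd5.neg_pow, mul_neg, hmulpow]
      rw [← hu, hn]
      ring
  have hg' : gPart j W.re W.im = b := by
    have hrfl : gPart j W.re W.im = ((↑(sqrt2Unit ^ j) : ℤ√2) * W ^ 5).re := rfl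
    rw [hrfl, ← hW]
  have hh' : hPart j W.re W.im = c := by
    have hrfl : hPart j W.re W.im = ((↑(sqrt2Unit ^ j) : ℤ√2) * W ^ 5).im := rfl
    rw [hrfl, ← hW]
  have habc : a ^ 2 = 2 * gPart j W.re W.im ^ 2 - hPart j W.re W.im ^ 2 := by
    rw [hg', hh']; linarith
  refine ⟨j, hj1, hj2, W.re, W.im, ?_, habc, ?_⟩
  · by_cases hv : W.im = 0
    · right
      refine ⟨?_, hv⟩
      have hWc : W = ((W.re : ℤ) : ℤ√2) := by
        ext <;> simp [hv]
      have hX5 : X = ((W.re ^ 5 : ℤ) : ℤ√2) * (↑(sqrt2Unit ^ j) : ℤ√2) := by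
        rw [hW]
        rw [show ((W.re ^ 5 : ℤ) : ℤ√2) = ((W.re : ℤ) : ℤ√2) ^ 5 by push_cast; ring, ← hWc]
        ring
      have hb5 : b = W.re ^ 5 * (↑(sqrt2Unit ^ j) : ℤ√2).re := by
        have h' := congrArg Zsqrtd.re hX5
        simp only [Zsqrtd.re_mul, Zsqrtd.re_intCast, Zsqrtd.im_intCast, mul_zero, zero_mul,
          add_zero] at h'
        exact h'
      have hc5 : c = W.re ^ 5 * (↑(sqrt2Unit ^ j) : ℤ√2).im := by
        have h' := congrArg Zsqrtd.im hX5
        simp only [Zsqrtd.im_mul, Zsqrtd.re_intCast, Zsqrtd.im_intCast, mul_zero, zero_mul,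
          add_zero, zero_add] at h'
        exact h'
      have hdb : W.re ∣ b := by
        rw [hb5]
        exact Dvd.dvd.mul_right (dvd_pow_self W.re (by norm_num)) _
      have hdc : W.re ∣ c := by
        rw [hc5]
        exact Dvd.dvd.mul_right (dvd_pow_self W.re (by norm_num)) _
      have hdg := Int.dvd_coe_gcd hdb hdc
      rw [hbc] at hdg
      have : IsUnit W.re := isUnit_of_dvd_one (by exact_mod_cast hdg)
      exact Int.isUnit_iff.mp this
    · left; exact hv
  · intro hv
    have hcast : (a : ℚ) ^ 2 =
        2 * (gPart j W.re W.im : ℚ) ^ 2 - (hPart j W.re W.im : ℚ) ^ 2 := by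
      exact_mod_cast congrArg (fun t : ℤ => (t : ℚ)) habc
    rw [div_pow, hcast, ← pow_mul]
end
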